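/- arXiv:1402.4322 — 4 statements merged into one kernel-verified Lean document; each statement's English description precedes it below -/
import Mathlib

section
/- SL(α) and SL*(α) are permutation invariant: if φ: (X,d) → (X',d') is a bijective isometry between finite metric spaces, then the associated ultrametrics satisfy u_α^{X'}(φ(x),φ(y)) = u_α^{X}(x,y) and (u*_α)^{X'}(φ(x),φ(y)) = (u*_α)^{X}(x,y) for all x,y ∈ X and every α > 0. -/
open Relation

def IsMetric {X : Type} (d : X → X → ℝ) : Prop :=
  (∀ x y, 0 ≤ d x y) ∧ (∀ x y, d x y = 0 ↔ x = y) ∧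
  (∀ x y, d x y = d y x) ∧ (∀ x y z, d x z ≤ d x y + d y z)

def IsUltrametric {X : Type} (d : X → X → ℝ) : Prop :=
  IsMetric d ∧ ∀ x y z, d x z ≤ max (d x y) (d y z)

/-- dimension of the Vietoris–Rips complex of `Y ⊆ X` at scale `t`:
(max cardinality of a subset of `Y` with pairwise distances ≤ t) − 1. -/
noncomputable def dimF {X : Type} (d : X → X → ℝ) (t : ℝ) (Y : Set X) : ℝ :=
  sSup { v : ℝ | ∃ S : Finset X, ↑S ⊆ Y ∧ (∀ s ∈ S, ∀ s' ∈ S, d s s' ≤ t) ∧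
    v = (S.card : ℝ) - 1 }

/-- the edge condition of the graph `G_α^t` on the blocks of the partition `P`. -/
def IsEdge {X : Type} (d : X → X → ℝ) (α t : ℝ) (P : Set (Set X)) (B B' : Set X) : Prop :=
  B ∈ P ∧ B' ∈ P ∧ B ≠ B' ∧
  (∃ x ∈ B, ∃ y ∈ B', d x y ≤ t) ∧
  (∃ S : Finset X, ↑S ⊆ B ∪ B' ∧ (∃ s ∈ S, s ∈ B) ∧ (∃ s ∈ S, s ∈ B') ∧
    (∀ s ∈ S, ∀ s' ∈ S, d s s' ≤ t) ∧
    min (dimF d t B) (dimF d t B') ≤ α * ((S.card : ℝ) - 1))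

/-- `B` and `B'` lie in the same connected component of `G_α^t`. -/
def SameComp {X : Type} (d : X → X → ℝ) (α t : ℝ) (P : Set (Set X)) (B B' : Set X) : Prop :=
  ReflTransGen (IsEdge d α t P) B B'

/-- SL(α) merging rule: merge the blocks of each connected component of `G_α^t`. -/
def mergeStep {X : Type} (d : X → X → ℝ) (α t : ℝ) (P : Set (Set X)) : Set (Set X) :=
  { C | ∃ B ∈ P, C = ⋃₀ { B' | B' ∈ P ∧ SameComp d α t P B B' } }

/-- the partition of `X` into singletons. -/
def singletons (X : Type) : Set (Set X) := { C | ∃ x : X, C = {x} }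

/-- the sorted list of values taken by `d` that are at most `t`. -/
noncomputable def distVals {X : Type} [Fintype X] (d : X → X → ℝ) (t : ℝ) : List ℝ :=
  ((Finset.image (fun p : X × X => d p.1 p.2) Finset.univ).filter (· ≤ t)).sort (· ≤ ·)

/-- the dendrogram of SL(α): fold the merging rule over the distance values ≤ t. -/
noncomputable def theta {X : Type} [Fintype X] (d : X → X → ℝ) (α : ℝ) (t : ℝ) :
    Set (Set X) :=
  (distVals d t).foldl (fun P s => mergeStep d α s P) (singletons X)

/-- the ultrametric associated to SL(α). -/
noncomputable def uAlpha {X : Type} [Fintype X] (d : X → X → ℝ) (α : ℝ) (x y : X) : ℝ :=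
  sInf { t : ℝ | 0 ≤ t ∧ ∃ B ∈ theta d α t, x ∈ B ∧ y ∈ B }

/-- `B` is a big block of its connected component `A` of `G_α^t`:
`α·#B ≥ max_{B' ∈ A} #B'`. -/
def IsBig {X : Type} (d : X → X → ℝ) (α t : ℝ) (P : Set (Set X)) (B : Set X) : Prop :=
  B ∈ P ∧ ∀ B', B' ∈ P → SameComp d α t P B B' → (B'.ncard : ℝ) ≤ α * (B.ncard : ℝ)

/-- `B, B'` lie in the same connected component of the subgraph `H_α(A)` of big blocks. -/
def HConn {X : Type} (d : X → X → ℝ) (α t : ℝ) (P : Set (Set X)) (B B' : Set X) : Prop :=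
  ReflTransGen (fun C C' => IsEdge d α t P C C' ∧ IsBig d α t P C ∧ IsBig d α t P C') B B'

/-- `B, B'` lie in the same connected component of the subgraph `S_α(A)` of small blocks. -/
def SConn {X : Type} (d : X → X → ℝ) (α t : ℝ) (P : Set (Set X)) (B B' : Set X) : Prop :=
  ReflTransGen (fun C C' => IsEdge d α t P C C' ∧ ¬ IsBig d α t P C ∧ ¬ IsBig d α t P C')
    B B'

/-- the SL*(α) relation between blocks of a common connected component `A` of `G_α^t`:
either both lie in the same component of `H_α(A)`, or `B` is big, `B'` is small,
and no big block of `A` outside the `H_α(A)`-component of `B` is adjacent to any block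
of the `S_α(A)`-component of `B'`. -/
def StarRel {X : Type} (d : X → X → ℝ) (α t : ℝ) (P : Set (Set X)) (B B' : Set X) : Prop :=
  B ∈ P ∧ B' ∈ P ∧ SameComp d α t P B B' ∧
  ((IsBig d α t P B ∧ IsBig d α t P B' ∧ HConn d α t P B B') ∨
   (IsBig d α t P B ∧ ¬ IsBig d α t P B' ∧
     ∀ D, D ∈ P → SameComp d α t P B D → IsBig d α t P D → ¬ HConn d α t P B D →
       ∀ E, E ∈ P → ¬ IsBig d α t P E → SConn d α t P B' E → ¬ IsEdge d α t P D E))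

/-- SL*(α) merging rule: merge blocks according to the equivalence relation generated
by `StarRel`. -/
def mergeStepStar {X : Type} (d : X → X → ℝ) (α t : ℝ) (P : Set (Set X)) : Set (Set X) :=
  { C | ∃ B ∈ P, C = ⋃₀ { B' | B' ∈ P ∧ EqvGen (StarRel d α t P) B B' } }

/-- the dendrogram of SL*(α). -/
noncomputable def thetaStar {X : Type} [Fintype X] (d : X → X → ℝ) (α : ℝ) (t : ℝ) :
    Set (Set X) :=
  (distVals d t).foldl (fun P s => mergeStepStar d α s P) (singletons X)

/-- the ultrametric associated to SL*(α). -/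
noncomputable def uStar {X : Type} [Fintype X] (d : X → X → ℝ) (α : ℝ) (x y : X) : ℝ :=
  sInf { t : ℝ | 0 ≤ t ∧ ∃ B ∈ thetaStar d α t, x ∈ B ∧ y ∈ B }

/-- there is a `t`-chain from `x` to `y`. -/
def HasChain {X : Type} (d : X → X → ℝ) (r : ℝ) (x y : X) : Prop :=
  ReflTransGen (fun a b => d a b ≤ r) x y

/-- the single linkage dendrogram: the partition into `t`-chain components. -/
def thetaSL {X : Type} (d : X → X → ℝ) (t : ℝ) : Set (Set X) :=
  { C | ∃ x : X, C = { y | HasChain d t x y } }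

/-- the single linkage ultrametric. -/
noncomputable def uSL {X : Type} (d : X → X → ℝ) (x y : X) : ℝ :=
  sInf { r : ℝ | 0 ≤ r ∧ HasChain d r x y }

section Transport

variable {X X' : Type} {d : X → X → ℝ} {d' : X' → X' → ℝ} {φ : X → X'}

private lemma reflTransGen_congr {A B : Type} (g : A ≃ B) {r : A → A → Prop}
    {r' : B → B → Prop} (h : ∀ a b, r' (g a) (g b) ↔ r a b) {a b : A} :
    ReflTransGen r' (g a) (g b) ↔ ReflTransGen r a b := by
  constructor
  · intro H
    have H2 := ReflTransGen.lift (r := r') (p := r) g.symm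
      (fun x y hxy => (h _ _).mp (by simpa using hxy)) _ _ H
    simpa [Function.onFun] using H2
  · exact fun H => ReflTransGen.lift g (fun a b hab => (h a b).mpr hab) _ _ H

private lemma eqvGen_lift {A B : Type} (g : A → B) {r : A → A → Prop} {r' : B → B → Prop}
    (h : ∀ a b, r a b → r' (g a) (g b)) {a b : A} (H : EqvGen r a b) :
    EqvGen r' (g a) (g b) := by
  induction H with
  | rel x y hxy => exact EqvGen.rel _ _ (h _ _ hxy)
  | refl x => exact EqvGen.refl _
  | symm x y _ ih => exact EqvGen.symm _ _ ih
  | trans x y z _ _ ih1 ih2 => exact EqvGen.trans _ _ _ ih1 ih2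

private lemma eqvGen_congr {A B : Type} (g : A ≃ B) {r : A → A → Prop} {r' : B → B → Prop}
    (h : ∀ a b, r' (g a) (g b) ↔ r a b) {a b : A} :
    EqvGen r' (g a) (g b) ↔ EqvGen r a b := by
  constructor
  · intro H
    have H2 := eqvGen_lift (r := r') (r' := r) g.symm
      (fun x y hxy => (h _ _).mp (by simpa using hxy)) H
    simpa using H2
  · exact fun H => eqvGen_lift g (fun a b hab => (h a b).mpr hab) H

/-- the bijection on power sets induced by a bijection. -/
private noncomputable def setEquiv (hφ : Function.Bijective φ) : Set X ≃ Set X' :=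
  Equiv.ofBijective (Set.image φ)
    ⟨Set.image_injective.mpr hφ.1, fun s => ⟨φ ⁻¹' s, Set.image_preimage_eq s hφ.2⟩⟩

private lemma exists_finset_preimage (hφ : Function.Bijective φ) (S' : Finset X') :
    ∃ S : Finset X, S.card = S'.card ∧ φ '' ↑S = ↑S' := by
  classical
  refine ⟨S'.image (Equiv.ofBijective φ hφ).symm,
    Finset.card_image_of_injective _ (Equiv.injective _), ?_⟩
  ext y
  simp only [Finset.coe_image, Set.mem_image, Finset.mem_coe]
  constructor
  · rintro ⟨x, ⟨s', hs', rfl⟩, rfl⟩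
    have h1 : φ ((Equiv.ofBijective φ hφ).symm s') = s' :=
      (Equiv.ofBijective φ hφ).apply_symm_apply s'
    rwa [h1]
  · intro hy
    exact ⟨(Equiv.ofBijective φ hφ).symm y, ⟨y, hy, rfl⟩,
      (Equiv.ofBijective φ hφ).apply_symm_apply y⟩

private lemma dimF_image (hφ : Function.Bijective φ)
    (hiso : ∀ x y, d' (φ x) (φ y) = d x y) (t : ℝ) (B : Set X) :
    dimF d' t (φ '' B) = dimF d t B := by
  classical
  unfold dimF
  congr 1
  ext v
  simp only [Set.mem_setOf_eq]
  constructor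
  · rintro ⟨S', hsub, hpair, rfl⟩
    obtain ⟨S, hcard, him⟩ := exists_finset_preimage hφ S'
    refine ⟨S, ?_, ?_, by rw [hcard]⟩
    · rw [← Set.image_subset_image_iff hφ.1, him]
      exact hsub
    · intro s hs s2 hs2
      have h1 : φ s ∈ (S' : Set X') := him ▸ ⟨s, hs, rfl⟩
      have h2 : φ s2 ∈ (S' : Set X') := him ▸ ⟨s2, hs2, rfl⟩
      have h3 := hpair _ h1 _ h2
      rwa [hiso] at h3
  · rintro ⟨S, hsub, hpair, rfl⟩
    refine ⟨S.image φ, ?_, ?_, by rw [Finset.card_image_of_injective _ hφ.1]⟩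
    · rw [Finset.coe_image]
      exact Set.image_mono hsub
    · intro s hs s2 hs2
      rw [Finset.mem_image] at hs hs2
      obtain ⟨a, ha, rfl⟩ := hs
      obtain ⟨b, hb, rfl⟩ := hs2
      rw [hiso]
      exact hpair a ha b hb

private lemma image_mem_image_iff (hφ : Function.Bijective φ) {P : Set (Set X)}
    {B : Set X} : φ '' B ∈ Set.image φ '' P ↔ B ∈ P :=
  (Set.image_injective.mpr hφ.1).mem_set_image

private lemma isEdge_image (hφ : Function.Bijective φ)
    (hiso : ∀ x y, d' (φ x) (φ y) = d x y) (α t : ℝ) (P : Set (Set X)) (B B' : Set X) :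
    IsEdge d' α t (Set.image φ '' P) (φ '' B) (φ '' B') ↔ IsEdge d α t P B B' := by
  classical
  unfold IsEdge
  rw [image_mem_image_iff hφ, image_mem_image_iff hφ,
    (Set.image_injective.mpr hφ.1).ne_iff, dimF_image hφ hiso, dimF_image hφ hiso]
  refine and_congr Iff.rfl (and_congr Iff.rfl (and_congr Iff.rfl (and_congr ?_ ?_)))
  · constructor
    · rintro ⟨x1, ⟨x, hx, rfl⟩, y1, ⟨y, hy, rfl⟩, hxy⟩
      exact ⟨x, hx, y, hy, by rwa [hiso] at hxy⟩
    · rintro ⟨x, hx, y, hy, hxy⟩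
      exact ⟨φ x, ⟨x, hx, rfl⟩, φ y, ⟨y, hy, rfl⟩, by rwa [hiso]⟩
  · constructor
    · rintro ⟨S', hsub, ⟨s1, hs1, hs1B⟩, ⟨s2, hs2, hs2B⟩, hpair, hdim⟩
      obtain ⟨S, hcard, him⟩ := exists_finset_preimage hφ S'
      refine ⟨S, ?_, ?_, ?_, ?_, by rwa [hcard]⟩
      · rw [← Set.image_subset_image_iff hφ.1, him, Set.image_union]
        exact hsub
      · have hmem : s1 ∈ φ '' (S : Set X) := him.symm ▸ (Finset.mem_coe.mpr hs1)
        obtain ⟨a, ha, rfl⟩ := hmem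
        exact ⟨a, Finset.mem_coe.mp ha, hφ.1.mem_set_image.mp hs1B⟩
      · have hmem : s2 ∈ φ '' (S : Set X) := him.symm ▸ (Finset.mem_coe.mpr hs2)
        obtain ⟨a, ha, rfl⟩ := hmem
        exact ⟨a, Finset.mem_coe.mp ha, hφ.1.mem_set_image.mp hs2B⟩
      · intro s hs s2 hs2
        have h1 : φ s ∈ (S' : Set X') := him ▸ ⟨s, hs, rfl⟩
        have h2 : φ s2 ∈ (S' : Set X') := him ▸ ⟨s2, hs2, rfl⟩
        have h3 := hpair _ h1 _ h2
        rwa [hiso] at h3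
    · rintro ⟨S, hsub, ⟨s1, hs1, hs1B⟩, ⟨s2, hs2, hs2B⟩, hpair, hdim⟩
      refine ⟨S.image φ, ?_, ?_, ?_, ?_, ?_⟩
      · rw [Finset.coe_image, ← Set.image_union]
        exact Set.image_mono hsub
      · exact ⟨φ s1, Finset.mem_image_of_mem φ hs1, ⟨s1, hs1B, rfl⟩⟩
      · exact ⟨φ s2, Finset.mem_image_of_mem φ hs2, ⟨s2, hs2B, rfl⟩⟩
      · intro s hs s2 hs2
        rw [Finset.mem_image] at hs hs2
        obtain ⟨a, ha, rfl⟩ := hs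
        obtain ⟨b, hb, rfl⟩ := hs2
        rw [hiso]
        exact hpair a ha b hb
      · rwa [Finset.card_image_of_injective _ hφ.1]

private lemma sameComp_image (hφ : Function.Bijective φ)
    (hiso : ∀ x y, d' (φ x) (φ y) = d x y) (α t : ℝ) (P : Set (Set X)) (B B' : Set X) :
    SameComp d' α t (Set.image φ '' P) (φ '' B) (φ '' B') ↔ SameComp d α t P B B' :=
  reflTransGen_congr (setEquiv hφ) (fun a b => isEdge_image hφ hiso α t P a b)

private lemma isBig_image (hφ : Function.Bijective φ)
    (hiso : ∀ x y, d' (φ x) (φ y) = d x y) (α t : ℝ) (P : Set (Set X)) (B : Set X) :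
    IsBig d' α t (Set.image φ '' P) (φ '' B) ↔ IsBig d α t P B := by
  unfold IsBig
  rw [image_mem_image_iff hφ, Set.ncard_image_of_injective B hφ.1]
  refine and_congr Iff.rfl ?_
  constructor
  · intro h2 B' hB' hsc
    have h3 := h2 (φ '' B') ((image_mem_image_iff hφ).mpr hB')
      ((sameComp_image hφ hiso α t P B B').mpr hsc)
    rwa [Set.ncard_image_of_injective _ hφ.1] at h3
  · rintro h2 B'' hB'' hsc
    obtain ⟨B', hB', rfl⟩ := hB''
    rw [Set.ncard_image_of_injective _ hφ.1]
    exact h2 B' hB' ((sameComp_image hφ hiso α t P B B').mp hsc)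

private lemma hConn_image (hφ : Function.Bijective φ)
    (hiso : ∀ x y, d' (φ x) (φ y) = d x y) (α t : ℝ) (P : Set (Set X)) (B B' : Set X) :
    HConn d' α t (Set.image φ '' P) (φ '' B) (φ '' B') ↔ HConn d α t P B B' :=
  reflTransGen_congr (setEquiv hφ) (fun a b =>
    and_congr (isEdge_image hφ hiso α t P a b)
      (and_congr (isBig_image hφ hiso α t P a) (isBig_image hφ hiso α t P b)))

private lemma sConn_image (hφ : Function.Bijective φ)
    (hiso : ∀ x y, d' (φ x) (φ y) = d x y) (α t : ℝ) (P : Set (Set X)) (B B' : Set X) :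
    SConn d' α t (Set.image φ '' P) (φ '' B) (φ '' B') ↔ SConn d α t P B B' :=
  reflTransGen_congr (setEquiv hφ) (fun a b =>
    and_congr (isEdge_image hφ hiso α t P a b)
      (and_congr (not_congr (isBig_image hφ hiso α t P a))
        (not_congr (isBig_image hφ hiso α t P b))))

private lemma starRel_image (hφ : Function.Bijective φ)
    (hiso : ∀ x y, d' (φ x) (φ y) = d x y) (α t : ℝ) (P : Set (Set X)) (B B' : Set X) :
    StarRel d' α t (Set.image φ '' P) (φ '' B) (φ '' B') ↔ StarRel d α t P B B' := by
  unfold StarRel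
  rw [image_mem_image_iff hφ, image_mem_image_iff hφ, sameComp_image hφ hiso]
  refine and_congr Iff.rfl (and_congr Iff.rfl (and_congr Iff.rfl (or_congr
    (and_congr (isBig_image hφ hiso α t P B) (and_congr (isBig_image hφ hiso α t P B')
      (hConn_image hφ hiso α t P B B')))
    (and_congr (isBig_image hφ hiso α t P B)
      (and_congr (not_congr (isBig_image hφ hiso α t P B')) ?_)))))
  constructor
  · intro H D hD hscD hbigD hhconnD E hE hnbigE hsconnE hedge
    exact H (φ '' D) ((image_mem_image_iff hφ).mpr hD)
      ((sameComp_image hφ hiso α t P B D).mpr hscD)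
      ((isBig_image hφ hiso α t P D).mpr hbigD)
      (fun h => hhconnD ((hConn_image hφ hiso α t P B D).mp h))
      (φ '' E) ((image_mem_image_iff hφ).mpr hE)
      (fun h => hnbigE ((isBig_image hφ hiso α t P E).mp h))
      ((sConn_image hφ hiso α t P B' E).mpr hsconnE)
      ((isEdge_image hφ hiso α t P D E).mpr hedge)
  · intro H D1 hD1 hscD hbigD hhconnD E1 hE1 hnbigE hsconnE hedge
    obtain ⟨D, hD, rfl⟩ := hD1
    obtain ⟨E, hE, rfl⟩ := hE1
    exact H D hD ((sameComp_image hφ hiso α t P B D).mp hscD)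
      ((isBig_image hφ hiso α t P D).mp hbigD)
      (fun h => hhconnD ((hConn_image hφ hiso α t P B D).mpr h))
      E hE (fun h => hnbigE ((isBig_image hφ hiso α t P E).mpr h))
      ((sConn_image hφ hiso α t P B' E).mp hsconnE)
      ((isEdge_image hφ hiso α t P D E).mp hedge)

private lemma sameClass_image (hφ : Function.Bijective φ)
    (hiso : ∀ x y, d' (φ x) (φ y) = d x y) (α t : ℝ) (P : Set (Set X)) (B : Set X) :
    ⋃₀ {C | C ∈ Set.image φ '' P ∧ SameComp d' α t (Set.image φ '' P) (φ '' B) C}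
      = φ '' ⋃₀ {C | C ∈ P ∧ SameComp d α t P B C} := by
  ext x
  simp only [Set.mem_sUnion, Set.mem_setOf_eq, Set.mem_image]
  constructor
  · rintro ⟨B1, ⟨⟨B0, hB0, rfl⟩, hsc⟩, hx⟩
    obtain ⟨x0, hx0, rfl⟩ := hx
    exact ⟨x0, ⟨B0, ⟨hB0, (sameComp_image hφ hiso α t P B B0).mp hsc⟩, hx0⟩, rfl⟩
  · rintro ⟨x0, ⟨B0, ⟨hB0, hsc⟩, hx0⟩, rfl⟩
    exact ⟨φ '' B0, ⟨⟨B0, hB0, rfl⟩, (sameComp_image hφ hiso α t P B B0).mpr hsc⟩,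
      ⟨x0, hx0, rfl⟩⟩

private lemma mergeStep_image (hφ : Function.Bijective φ)
    (hiso : ∀ x y, d' (φ x) (φ y) = d x y) (α t : ℝ) (P : Set (Set X)) :
    mergeStep d' α t (Set.image φ '' P) = Set.image φ '' mergeStep d α t P := by
  ext C
  simp only [mergeStep, Set.mem_setOf_eq, Set.mem_image]
  constructor
  · rintro ⟨B1, ⟨B0, hB0, rfl⟩, rfl⟩
    exact ⟨_, ⟨B0, hB0, rfl⟩, (sameClass_image hφ hiso α t P B0).symm⟩
  · rintro ⟨C0, ⟨B0, hB0, rfl⟩, rfl⟩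
    exact ⟨φ '' B0, ⟨B0, hB0, rfl⟩, (sameClass_image hφ hiso α t P B0).symm⟩

private lemma starClass_image (hφ : Function.Bijective φ)
    (hiso : ∀ x y, d' (φ x) (φ y) = d x y) (α t : ℝ) (P : Set (Set X)) (B : Set X) :
    ⋃₀ {C | C ∈ Set.image φ '' P ∧ EqvGen (StarRel d' α t (Set.image φ '' P)) (φ '' B) C}
      = φ '' ⋃₀ {C | C ∈ P ∧ EqvGen (StarRel d α t P) B C} := by
  have heqv : ∀ B0 B1 : Set X,
      EqvGen (StarRel d' α t (Set.image φ '' P)) (φ '' B0) (φ '' B1)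
        ↔ EqvGen (StarRel d α t P) B0 B1 :=
    fun B0 B1 => eqvGen_congr (setEquiv hφ) (fun a b => starRel_image hφ hiso α t P a b)
  ext x
  simp only [Set.mem_sUnion, Set.mem_setOf_eq, Set.mem_image]
  constructor
  · rintro ⟨B1, ⟨⟨B0, hB0, rfl⟩, hsc⟩, hx⟩
    obtain ⟨x0, hx0, rfl⟩ := hx
    exact ⟨x0, ⟨B0, ⟨hB0, (heqv B B0).mp hsc⟩, hx0⟩, rfl⟩
  · rintro ⟨x0, ⟨B0, ⟨hB0, hsc⟩, hx0⟩, rfl⟩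
    exact ⟨φ '' B0, ⟨⟨B0, hB0, rfl⟩, (heqv B B0).mpr hsc⟩, ⟨x0, hx0, rfl⟩⟩

private lemma mergeStepStar_image (hφ : Function.Bijective φ)
    (hiso : ∀ x y, d' (φ x) (φ y) = d x y) (α t : ℝ) (P : Set (Set X)) :
    mergeStepStar d' α t (Set.image φ '' P) = Set.image φ '' mergeStepStar d α t P := by
  ext C
  simp only [mergeStepStar, Set.mem_setOf_eq, Set.mem_image]
  constructor
  · rintro ⟨B1, ⟨B0, hB0, rfl⟩, rfl⟩
    exact ⟨_, ⟨B0, hB0, rfl⟩, (starClass_image hφ hiso α t P B0).symm⟩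
  · rintro ⟨C0, ⟨B0, hB0, rfl⟩, rfl⟩
    exact ⟨φ '' B0, ⟨B0, hB0, rfl⟩, (starClass_image hφ hiso α t P B0).symm⟩

private lemma singletons_image (hφ : Function.Bijective φ) :
    Set.image φ '' singletons X = singletons X' := by
  ext C
  simp only [singletons, Set.mem_image, Set.mem_setOf_eq]
  constructor
  · rintro ⟨C0, ⟨x, rfl⟩, rfl⟩
    exact ⟨φ x, Set.image_singleton⟩
  · rintro ⟨x1, rfl⟩
    obtain ⟨x, rfl⟩ := hφ.2 x1
    exact ⟨{x}, ⟨x, rfl⟩, Set.image_singleton⟩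

private lemma distVals_eq [Fintype X] [Fintype X'] (hφ : Function.Bijective φ)
    (hiso : ∀ x y, d' (φ x) (φ y) = d x y) (t : ℝ) :
    distVals d' t = distVals d t := by
  have h : Finset.image (fun p : X' × X' => d' p.1 p.2) Finset.univ
      = Finset.image (fun p : X × X => d p.1 p.2) Finset.univ := by
    ext v
    simp only [Finset.mem_image, Finset.mem_univ, true_and]
    constructor
    · rintro ⟨p, rfl⟩
      obtain ⟨a, ha⟩ := hφ.2 p.1
      obtain ⟨b, hb⟩ := hφ.2 p.2
      exact ⟨(a, b), by rw [← ha, ← hb]; exact (hiso a b).symm⟩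
    · rintro ⟨p, rfl⟩
      exact ⟨(φ p.1, φ p.2), hiso p.1 p.2⟩
  rw [distVals, distVals, h]

private lemma foldl_merge [Fintype X] [Fintype X'] (hφ : Function.Bijective φ)
    (hiso : ∀ x y, d' (φ x) (φ y) = d x y) (α : ℝ) :
    ∀ (l : List ℝ) (P : Set (Set X)),
      l.foldl (fun P s => mergeStep d' α s P) (Set.image φ '' P)
        = Set.image φ '' l.foldl (fun P s => mergeStep d α s P) P := by
  intro l
  induction l with
  | nil => intro P; rfl
  | cons a l ih =>
    intro P
    simp only [List.foldl_cons]
    rw [mergeStep_image hφ hiso]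
    exact ih _

private lemma foldl_mergeStar [Fintype X] [Fintype X'] (hφ : Function.Bijective φ)
    (hiso : ∀ x y, d' (φ x) (φ y) = d x y) (α : ℝ) :
    ∀ (l : List ℝ) (P : Set (Set X)),
      l.foldl (fun P s => mergeStepStar d' α s P) (Set.image φ '' P)
        = Set.image φ '' l.foldl (fun P s => mergeStepStar d α s P) P := by
  intro l
  induction l with
  | nil => intro P; rfl
  | cons a l ih =>
    intro P
    simp only [List.foldl_cons]
    rw [mergeStepStar_image hφ hiso]
    exact ih _

private lemma theta_image [Fintype X] [Fintype X'] (hφ : Function.Bijective φ)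
    (hiso : ∀ x y, d' (φ x) (φ y) = d x y) (α t : ℝ) :
    theta d' α t = Set.image φ '' theta d α t := by
  unfold theta
  rw [distVals_eq hφ hiso t, ← singletons_image hφ]
  exact foldl_merge hφ hiso α _ _

private lemma thetaStar_image [Fintype X] [Fintype X'] (hφ : Function.Bijective φ)
    (hiso : ∀ x y, d' (φ x) (φ y) = d x y) (α t : ℝ) :
    thetaStar d' α t = Set.image φ '' thetaStar d α t := by
  unfold thetaStar
  rw [distVals_eq hφ hiso t, ← singletons_image hφ]
  exact foldl_mergeStar hφ hiso α _ _

end Transport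

theorem SLalpha_permutation_invariant {X X' : Type} [Fintype X] [Fintype X']
    (d : X → X → ℝ) (d' : X' → X' → ℝ) (hd : IsMetric d) (hd' : IsMetric d')
    (φ : X → X') (hφ : Function.Bijective φ)
    (hiso : ∀ x y, d' (φ x) (φ y) = d x y) (α : ℝ) (hα : 0 < α) :
    (∀ x y, uAlpha d' α (φ x) (φ y) = uAlpha d α x y) ∧
    (∀ x y, uStar d' α (φ x) (φ y) = uStar d α x y) := by
  constructor
  · intro x y
    unfold uAlpha
    congr 1
    ext t
    simp only [Set.mem_setOf_eq]
    rw [theta_image hφ hiso α t]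
    constructor
    · rintro ⟨h0, B1, ⟨B, hB, rfl⟩, hx, hy⟩
      exact ⟨h0, B, hB, hφ.1.mem_set_image.mp hx, hφ.1.mem_set_image.mp hy⟩
    · rintro ⟨h0, B, hB, hx, hy⟩
      exact ⟨h0, φ '' B, ⟨B, hB, rfl⟩, ⟨x, hx, rfl⟩, ⟨y, hy, rfl⟩⟩
  · intro x y
    unfold uStar
    congr 1
    ext t
    simp only [Set.mem_setOf_eq]
    rw [thetaStar_image hφ hiso α t]
    constructor
    · rintro ⟨h0, B1, ⟨B, hB, rfl⟩, hx, hy⟩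
      exact ⟨h0, B, hB, hφ.1.mem_set_image.mp hx, hφ.1.mem_set_image.mp hy⟩
    · rintro ⟨h0, B, hB, hx, hy⟩
      exact ⟨h0, φ '' B, ⟨B, hB, rfl⟩, ⟨x, hx, rfl⟩, ⟨y, hy, rfl⟩⟩
end

section
/- Let (X,d) be a finite metric space with n points. If α ≥ (n−2)/2, then SL(α) coincides with single linkage: θ_α(t) = θ_SL(t) for all t ≥ 0, and consequently u_α(x,y) = u_SL(x,y) for all x,y ∈ X. -/
open Relation

section Aux

variable {X : Type} {d : X → X → ℝ}

/-- the chain-block of `x` at level `r`. -/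
def blk (d : X → X → ℝ) (r : ℝ) (x : X) : Set X := { y | HasChain d r x y }

lemma blk_mem_thetaSL (r : ℝ) (x : X) : blk d r x ∈ thetaSL d r := ⟨x, rfl⟩

lemma mem_blk_self (r : ℝ) (x : X) : x ∈ blk d r x := ReflTransGen.refl

lemma chain_symm (hd : IsMetric d) {r : ℝ} {x y : X} (h : HasChain d r x y) :
    HasChain d r y x := by
  induction h with
  | refl => exact ReflTransGen.refl
  | tail _ hbc ih => exact ReflTransGen.head (by rw [hd.2.2.1]; exact hbc) ih

lemma chain_mono {r s : ℝ} (hrs : r ≤ s) {x y : X} (h : HasChain d r x y) :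
    HasChain d s x y :=
  ReflTransGen.mono (fun _ _ hab => le_trans hab hrs) _ _ h

lemma block_eq (hd : IsMetric d) {r : ℝ} {B : Set X} {x : X}
    (hB : B ∈ thetaSL d r) (hx : x ∈ B) : B = blk d r x := by
  obtain ⟨z, rfl⟩ := hB
  have hzx : HasChain d r z x := hx
  ext y
  exact ⟨fun hzy => (chain_symm hd hzx).trans hzy, fun hxy => hzx.trans hxy⟩

lemma thetaSL_disj (hd : IsMetric d) {r : ℝ} {B B' : Set X}
    (hB : B ∈ thetaSL d r) (hB' : B' ∈ thetaSL d r) (hne : B ≠ B')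
    {x : X} (hx : x ∈ B) : x ∉ B' := fun hx' =>
  hne ((block_eq hd hB hx).trans (block_eq hd hB' hx').symm)

lemma dimF_le_ncard (d : X → X → ℝ) (t : ℝ) (B : Set X) (hB : B.Finite) :
    dimF d t B ≤ (B.ncard : ℝ) - 1 := by
  have hne : { v : ℝ | ∃ S : Finset X, ↑S ⊆ B ∧ (∀ s ∈ S, ∀ s' ∈ S, d s s' ≤ t) ∧
      v = (S.card : ℝ) - 1 }.Nonempty := ⟨-1, ∅, by simp, by simp, by simp⟩
  apply csSup_le hne
  rintro v ⟨S, hS, -, rfl⟩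
  have hc : S.card ≤ B.ncard := by
    rw [← Set.ncard_coe_finset]
    exact Set.ncard_le_ncard hS hB
  have : (S.card : ℝ) ≤ (B.ncard : ℝ) := Nat.cast_le.mpr hc
  linarith

lemma isEdge_of_dist [Fintype X] (hd : IsMetric d) {α : ℝ}
    (hn : ((Fintype.card X : ℝ) - 2) / 2 ≤ α) {r s : ℝ} {B B' : Set X}
    (hB : B ∈ thetaSL d r) (hB' : B' ∈ thetaSL d r) (hne : B ≠ B')
    {x y : X} (hx : x ∈ B) (hy : y ∈ B') (hxy : d x y ≤ s) :
    IsEdge d α s (thetaSL d r) B B' := by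
  classical
  have hxny : x ≠ y := fun h => thetaSL_disj hd hB hB' hne hx (h ▸ hy)
  have hs0 : (0 : ℝ) ≤ s := le_trans (hd.1 x y) hxy
  refine ⟨hB, hB', hne, ⟨x, hx, y, hy, hxy⟩, {x, y}, ?_, ⟨x, by simp, hx⟩,
    ⟨y, by simp, hy⟩, ?_, ?_⟩
  · intro z hz
    simp only [Finset.coe_insert, Finset.coe_singleton, Set.mem_insert_iff,
      Set.mem_singleton_iff] at hz
    rcases hz with rfl | rfl
    · exact Or.inl hx
    · exact Or.inr hy
  · intro a ha b hb
    simp only [Finset.mem_insert, Finset.mem_singleton] at ha hb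
    have h0 : ∀ z : X, d z z ≤ s := fun z => by
      rw [(hd.2.1 z z).mpr rfl]; exact hs0
    rcases ha with rfl | rfl <;> rcases hb with rfl | rfl <;>
      first
        | exact hxy
        | (rw [hd.2.2.1]; exact hxy)
        | exact h0 _
  · have hcard : ({x, y} : Finset X).card = 2 := by
      rw [Finset.card_insert_of_notMem (by simpa using hxny), Finset.card_singleton]
    rw [hcard]
    have hdisj : Disjoint B B' := Set.disjoint_left.mpr (fun a ha ha' => thetaSL_disj hd hB hB' hne ha ha')
    have hBfin : B.Finite := Set.toFinite B
    have hB'fin : B'.Finite := Set.toFinite B'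
    have hsum : B.ncard + B'.ncard ≤ Fintype.card X := by
      have h := Set.ncard_le_ncard (Set.subset_univ (B ∪ B')) (Set.toFinite _)
      rw [Set.ncard_univ, Nat.card_eq_fintype_card] at h
      rw [← Set.ncard_union_eq hdisj hBfin hB'fin]
      exact h
    have hsum' : (B.ncard : ℝ) + (B'.ncard : ℝ) ≤ (Fintype.card X : ℝ) := by
      exact_mod_cast hsum
    have h1 := dimF_le_ncard d s B hBfin
    have h2 := dimF_le_ncard d s B' hB'fin
    rcases le_total (B.ncard : ℝ) (B'.ncard : ℝ) with h | h
    · calc min (dimF d s B) (dimF d s B') ≤ dimF d s B := min_le_left _ _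
        _ ≤ α * ((2 : ℕ) - 1 : ℝ) := by push_cast; linarith
    · calc min (dimF d s B) (dimF d s B') ≤ dimF d s B' := min_le_right _ _
        _ ≤ α * ((2 : ℕ) - 1 : ℝ) := by push_cast; linarith

lemma sUnion_comp_eq [Fintype X] (hd : IsMetric d) {α : ℝ}
    (hn : ((Fintype.card X : ℝ) - 2) / 2 ≤ α) {r s : ℝ} (hrs : r ≤ s) (x : X) :
    ⋃₀ { B' | B' ∈ thetaSL d r ∧ SameComp d α s (thetaSL d r) (blk d r x) B' }
      = { y | HasChain d s x y } := by
  set P := thetaSL d r with hP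
  ext y
  constructor
  · rintro ⟨B', ⟨hB'P, hcomp⟩, hyB'⟩
    have main : ∀ B', SameComp d α s P (blk d r x) B' →
        ∀ y, y ∈ B' → HasChain d s x y := by
      intro B' h
      induction h with
      | refl => exact fun y hy => chain_mono hrs hy
      | tail _ hedge ih =>
        intro y hy
        obtain ⟨hB₁, hB₂, -, ⟨a, ha, b, hb, hab'⟩, -⟩ := hedge
        have h1 : HasChain d s x a := ih a ha
        have h2 : HasChain d s b y := by
          have := block_eq hd hB₂ hb
          rw [this] at hy
          exact chain_mono hrs hy
        exact (h1.tail hab').trans h2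
    exact main B' hcomp y hyB'
  · intro hy
    have main : ∀ y, HasChain d s x y →
        ∃ B', (B' ∈ P ∧ SameComp d α s P (blk d r x) B') ∧ y ∈ B' := by
      intro y hy
      induction hy with
      | refl => exact ⟨blk d r x, ⟨blk_mem_thetaSL r x, ReflTransGen.refl⟩,
          mem_blk_self r x⟩
      | @tail b c _ hbc ih =>
        obtain ⟨B', ⟨hB'P, hcomp⟩, hbB'⟩ := ih
        by_cases hc : c ∈ B'
        · exact ⟨B', ⟨hB'P, hcomp⟩, hc⟩
        · have hB''P : blk d r c ∈ P := blk_mem_thetaSL r c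
          have hne : B' ≠ blk d r c := fun h => hc (h ▸ mem_blk_self r c)
          have hedge : IsEdge d α s P B' (blk d r c) :=
            isEdge_of_dist hd hn hB'P hB''P hne hbB' (mem_blk_self r c) hbc
          exact ⟨blk d r c, ⟨hB''P, hcomp.tail hedge⟩, mem_blk_self r c⟩
    exact main y hy

lemma mergeStep_thetaSL [Fintype X] (hd : IsMetric d) {α : ℝ}
    (hn : ((Fintype.card X : ℝ) - 2) / 2 ≤ α) {r s : ℝ} (hrs : r ≤ s) :
    mergeStep d α s (thetaSL d r) = thetaSL d s := by
  ext C
  constructor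
  · rintro ⟨B, hB, rfl⟩
    obtain ⟨z, rfl⟩ := hB
    exact ⟨z, sUnion_comp_eq hd hn hrs z⟩
  · rintro ⟨z, rfl⟩
    exact ⟨blk d r z, blk_mem_thetaSL r z, (sUnion_comp_eq hd hn hrs z).symm⟩

lemma foldl_max_spec : ∀ (L : List ℝ) (r : ℝ),
    r ≤ L.foldl max r ∧ ∀ s ∈ L, s ≤ L.foldl max r := by
  intro L
  induction L with
  | nil => exact fun r => ⟨le_refl r, by simp⟩
  | cons a L ih =>
    intro r
    refine ⟨le_trans (le_max_left r a) (ih (max r a)).1, ?_⟩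
    intro s hs
    rcases List.mem_cons.mp hs with rfl | hs
    · exact le_trans (le_max_right r s) (ih (max r s)).1
    · exact (ih (max r a)).2 s hs

lemma foldl_max_le {t : ℝ} : ∀ (L : List ℝ) (r : ℝ), r ≤ t → (∀ s ∈ L, s ≤ t) →
    L.foldl max r ≤ t := by
  intro L
  induction L with
  | nil => exact fun r hr _ => hr
  | cons a L ih =>
    intro r hr h
    exact ih (max r a) (max_le hr (h a List.mem_cons_self))
      (fun s hs => h s (List.mem_cons_of_mem a hs))

lemma fold_merge [Fintype X] (hd : IsMetric d) {α : ℝ}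
    (hn : ((Fintype.card X : ℝ) - 2) / 2 ≤ α) :
    ∀ (L : List ℝ), L.Pairwise (· ≤ ·) → ∀ r : ℝ, (∀ s ∈ L, r ≤ s) →
    L.foldl (fun P s => mergeStep d α s P) (thetaSL d r) = thetaSL d (L.foldl max r) := by
  intro L
  induction L with
  | nil => intro _ r _; rfl
  | cons a L ih =>
    intro hsort r hr
    have hra : r ≤ a := hr a List.mem_cons_self
    have h1 : mergeStep d α a (thetaSL d r) = thetaSL d a := mergeStep_thetaSL hd hn hra
    have h2 : max r a = a := max_eq_right hra
    simp only [List.foldl_cons, h1, h2]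
    exact ih hsort.of_cons a (fun s hs => (List.pairwise_cons.mp hsort).1 s hs)

lemma thetaSL_congr {s s' : ℝ} (h : ∀ a b : X, d a b ≤ s ↔ d a b ≤ s') :
    thetaSL d s = thetaSL d s' := by
  have hch : ∀ x y : X, HasChain d s x y ↔ HasChain d s' x y := fun x y =>
    ⟨ReflTransGen.mono (fun a b hab => (h a b).mp hab) _ _,
     ReflTransGen.mono (fun a b hab => (h a b).mpr hab) _ _⟩
  ext C
  constructor
  · rintro ⟨x, rfl⟩; exact ⟨x, by ext y; exact hch x y⟩
  · rintro ⟨x, rfl⟩; exact ⟨x, by ext y; exact (hch x y).symm⟩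

lemma singletons_eq_thetaSL (hd : IsMetric d) : singletons X = thetaSL d (-1) := by
  have hb : ∀ x : X, { y | HasChain d (-1) x y } = {x} := by
    intro x
    ext y
    simp only [Set.mem_setOf_eq, Set.mem_singleton_iff]
    constructor
    · intro h
      induction h with
      | refl => rfl
      | tail _ hbc _ => exact absurd (lt_of_le_of_lt hbc (by norm_num)) (not_lt.mpr (hd.1 _ _))
    · rintro rfl; exact ReflTransGen.refl
  ext C
  constructor
  · rintro ⟨x, rfl⟩; exact ⟨x, (hb x).symm⟩
  · rintro ⟨x, rfl⟩; exact ⟨x, hb x⟩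

lemma mem_distVals [Fintype X] {t v : ℝ} :
    v ∈ distVals d t ↔ (∃ p : X × X, d p.1 p.2 = v) ∧ v ≤ t := by
  simp [distVals, Finset.mem_sort, Finset.mem_filter, Finset.mem_image]

lemma theta_eq_thetaSL [Fintype X] (hd : IsMetric d) {α : ℝ}
    (hn : ((Fintype.card X : ℝ) - 2) / 2 ≤ α) {t : ℝ} (ht : 0 ≤ t) :
    theta d α t = thetaSL d t := by
  set L := distVals d t with hL
  set m := L.foldl max (-1) with hm
  have hsort : L.Pairwise (· ≤ ·) := Finset.pairwise_sort _ _
  have hle : ∀ s ∈ L, s ≤ t := fun s hs => (mem_distVals.mp hs).2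
  have hge : ∀ s ∈ L, (-1 : ℝ) ≤ s := by
    intro s hs
    obtain ⟨⟨p, hp⟩, -⟩ := mem_distVals.mp hs
    linarith [hd.1 p.1 p.2]
  have h1 : theta d α t = thetaSL d m := by
    rw [theta, ← hL, singletons_eq_thetaSL hd]
    exact fold_merge hd hn L hsort (-1) hge
  rw [h1]
  apply thetaSL_congr
  intro a b
  have hmt : m ≤ t := foldl_max_le L (-1) (by linarith) hle
  constructor
  · intro h; linarith
  · intro h
    have : d a b ∈ L := mem_distVals.mpr ⟨⟨(a, b), rfl⟩, h⟩
    exact (foldl_max_spec L (-1)).2 _ this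

lemma exists_block_iff_chain (hd : IsMetric d) {t : ℝ} (x y : X) :
    (∃ B ∈ thetaSL d t, x ∈ B ∧ y ∈ B) ↔ HasChain d t x y := by
  constructor
  · rintro ⟨B, hB, hx, hy⟩
    obtain ⟨z, rfl⟩ := hB
    exact (chain_symm hd hx).trans hy
  · intro h
    exact ⟨blk d t x, blk_mem_thetaSL t x, mem_blk_self t x, h⟩

end Aux

theorem SLalpha_eq_SL_of_large_alpha {X : Type} [Fintype X] (d : X → X → ℝ)
    (hd : IsMetric d) (α : ℝ) (hα : 0 < α)
    (hn : ((Fintype.card X : ℝ) - 2) / 2 ≤ α) :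
    (∀ t : ℝ, 0 ≤ t → theta d α t = thetaSL d t) ∧
    (∀ x y, uAlpha d α x y = uSL d x y) := by
  have hpart : ∀ t : ℝ, 0 ≤ t → theta d α t = thetaSL d t := fun t ht =>
    theta_eq_thetaSL hd hn ht
  refine ⟨hpart, fun x y => ?_⟩
  unfold uAlpha uSL
  congr 1
  ext t
  simp only [Set.mem_setOf_eq]
  constructor
  · rintro ⟨ht, hB⟩
    rw [hpart t ht] at hB
    exact ⟨ht, (exists_block_iff_chain hd x y).mp hB⟩
  · rintro ⟨ht, h⟩
    refine ⟨ht, ?_⟩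
    rw [hpart t ht]
    exact (exists_block_iff_chain hd x y).mpr h
end

section
/- SL(1) is not stable in the Gromov–Hausdorff sense: for every ε > 0 there exist an 8-point set X and two metrics d, d' on X such that d_GH((X,d),(X,d')) = ε/2, while the output ultrametrics u = u₁ of SL(1) applied to (X,d) and u' = u₁ of SL(1) applied to (X,d') satisfy d_GH((X,u),(X,u')) = (1+ε)/2. (Concretely, (X,d) is the path metric of the graph consisting of two 4-cycles joined by an edge x₀y₀ where every edge has length 1, and d' is the same except d'(x₀,y₀) = 1+ε; then u ≡ 1 off the diagonal, while u' equals 1 within each 4-cycle and 2+ε between the two 4-cycles.) -/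
open Relation

/-- A correspondence between `A` and `B`. -/
def IsCorrespondence {A B : Type} (R : Set (A × B)) : Prop :=
  (∀ a, ∃ b, (a, b) ∈ R) ∧ (∀ b, ∃ a, (a, b) ∈ R)

/-- The distortion of a correspondence. -/
noncomputable def distortion {A B : Type} (dA : A → A → ℝ) (dB : B → B → ℝ)
    (R : Set (A × B)) : ℝ :=
  sSup { v : ℝ | ∃ p ∈ R, ∃ q ∈ R, v = |dA p.1 q.1 - dB p.2 q.2| }

/-- The Gromov–Hausdorff distance: half the infimum over correspondences of the distortion. -/
noncomputable def ghDist {A B : Type} (dA : A → A → ℝ) (dB : B → B → ℝ) : ℝ :=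
  (1 / 2) * sInf { v : ℝ | ∃ R : Set (A × B), IsCorrespondence R ∧ v = distortion dA dB R }

namespace SLnot

def dN : Fin 8 → Fin 8 → ℕ := fun i j =>
  if i = j then 0 else
  if ((i : ℕ) < 4 ↔ (j : ℕ) < 4) then 1
  else 1 + (if i = 0 ∨ i = 4 then 0 else 1) + (if j = 0 ∨ j = 4 then 0 else 1)

def cN : Fin 8 → Fin 8 → ℕ := fun i j => if ((i : ℕ) < 4 ↔ (j : ℕ) < 4) then 0 else 1

noncomputable def dd : Fin 8 → Fin 8 → ℝ := fun i j => (dN i j : ℝ)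

noncomputable def dd' (ε : ℝ) : Fin 8 → Fin 8 → ℝ :=
  fun i j => (dN i j : ℝ) + ε * (cN i j : ℝ)

lemma dN_self (i : Fin 8) : dN i i = 0 := by simp [dN]
lemma cN_self (i : Fin 8) : cN i i = 0 := by simp [cN]
lemma dN_symm : ∀ i j, dN i j = dN j i := by decide
lemma cN_symm : ∀ i j, cN i j = cN j i := by decide
lemma dN_eq_zero : ∀ i j, dN i j = 0 → i = j := by decide
lemma dN_tri : ∀ i j k, dN i k ≤ dN i j + dN j k := by decide
lemma cN_tri : ∀ i j k, cN i k ≤ cN i j + cN j k := by decide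
lemma dN_le3 : ∀ i j, dN i j ≤ 3 := by decide
lemma cN_le1 : ∀ i j, cN i j ≤ 1 := by decide
lemma one_le_dN : ∀ i j, i ≠ j → 1 ≤ dN i j := by decide

lemma dd_metric : IsMetric dd := by
  refine ⟨fun i j => by simp only [dd]; positivity, fun i j => ?_, fun i j => ?_, fun i j k => ?_⟩
  · constructor
    · intro h
      simp only [dd] at h
      exact dN_eq_zero i j (by exact_mod_cast h)
    · rintro rfl; simp [dd, dN_self]
  · simp [dd, dN_symm i j]
  · have := dN_tri i j k
    simp only [dd]
    exact_mod_cast this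

lemma dd'_metric {ε : ℝ} (hε : 0 < ε) : IsMetric (dd' ε) := by
  refine ⟨fun i j => ?_, fun i j => ?_, fun i j => ?_, fun i j k => ?_⟩
  · have h1 : (0:ℝ) ≤ (dN i j : ℝ) := by positivity
    have h2 : (0:ℝ) ≤ ε * (cN i j : ℝ) := by positivity
    simp only [dd']; linarith
  · constructor
    · intro h
      by_contra hne
      have h1 : (1:ℝ) ≤ (dN i j : ℝ) := by exact_mod_cast one_le_dN i j hne
      have h2 : (0:ℝ) ≤ ε * (cN i j : ℝ) := by positivity
      simp only [dd'] at h; linarith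
    · rintro rfl; simp [dd', dN_self, cN_self]
  · simp [dd', dN_symm i j, cN_symm i j]
  · have h1 : (dN i k : ℝ) ≤ (dN i j : ℝ) + (dN j k : ℝ) := by exact_mod_cast dN_tri i j k
    have h2 : (cN i k : ℝ) ≤ (cN i j : ℝ) + (cN j k : ℝ) := by exact_mod_cast cN_tri i j k
    have h3 : ε * (cN i k : ℝ) ≤ ε * ((cN i j : ℝ) + (cN j k : ℝ)) :=
      mul_le_mul_of_nonneg_left h2 hε.le
    simp only [dd']; linarith

end SLnot
namespace SLnot

section Generic
variable {X : Type} {d : X → X → ℝ} {α t : ℝ} {P : Set (Set X)}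

lemma sameComp_eq_of_no_edge (h : ∀ B B', ¬ IsEdge d α t P B B') {B B' : Set X}
    (hs : SameComp d α t P B B') : B = B' := by
  induction hs with
  | refl => rfl
  | tail _ he _ => exact absurd he (h _ _)

lemma mergeStep_of_no_edge (h : ∀ B B', ¬ IsEdge d α t P B B') :
    mergeStep d α t P = P := by
  have key : ∀ B ∈ P, {B' | B' ∈ P ∧ SameComp d α t P B B'} = {B} := by
    intro B hB
    ext B'
    constructor
    · rintro ⟨_, h'⟩
      exact (sameComp_eq_of_no_edge h h').symm
    · rintro rfl
      exact ⟨hB, ReflTransGen.refl⟩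
  ext C
  simp only [mergeStep, Set.mem_setOf_eq]
  constructor
  · rintro ⟨B, hB, rfl⟩
    rw [key B hB, Set.sUnion_singleton]
    exact hB
  · intro hC
    exact ⟨C, hC, by rw [key C hC, Set.sUnion_singleton]⟩

lemma mergeStep_of_conn (hne : P.Nonempty)
    (h : ∀ B ∈ P, ∀ B' ∈ P, SameComp d α t P B B') :
    mergeStep d α t P = {⋃₀ P} := by
  have key : ∀ B ∈ P, {B' | B' ∈ P ∧ SameComp d α t P B B'} = P := by
    intro B hB
    ext B'
    exact ⟨fun h' => h'.1, fun h' => ⟨h', h B hB B' h'⟩⟩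
  ext C
  simp only [mergeStep, Set.mem_setOf_eq, Set.mem_singleton_iff]
  constructor
  · rintro ⟨B, hB, rfl⟩
    rw [key B hB]
  · rintro rfl
    obtain ⟨B, hB⟩ := hne
    exact ⟨B, hB, by rw [key B hB]⟩

lemma mergeStep_single (A : Set X) : mergeStep d α t {A} = {A} := by
  apply mergeStep_of_no_edge
  rintro B B' ⟨hB, hB', hne, -⟩
  rw [Set.mem_singleton_iff] at hB hB'
  exact hne (hB.trans hB'.symm)

lemma isEdge_symm (hd : ∀ x y, d x y = d y x) {B B' : Set X}
    (h : IsEdge d α t P B B') : IsEdge d α t P B' B := by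
  obtain ⟨h1, h2, h3, ⟨x, hx, y, hy, hxy⟩, S, hS, hS1, hS2, hpw, hmin⟩ := h
  exact ⟨h2, h1, h3.symm, ⟨y, hy, x, hx, (hd x y) ▸ hxy⟩,
    S, by rwa [Set.union_comm] at hS, hS2, hS1, hpw, by rwa [min_comm] at hmin⟩

lemma sameComp_symm (hd : ∀ x y, d x y = d y x) {B B' : Set X}
    (h : SameComp d α t P B B') : SameComp d α t P B' B :=
  by haveI : Std.Symm (IsEdge d α t P) := ⟨fun _ _ he => isEdge_symm hd he⟩; exact Std.Symm.symm (r := ReflTransGen (IsEdge d α t P)) _ _ h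

lemma dimF_le {Y : Set X} {n : ℝ}
    (h : ∀ S : Finset X, ↑S ⊆ Y → (∀ s ∈ S, ∀ s' ∈ S, d s s' ≤ t) →
      (S.card : ℝ) - 1 ≤ n) : dimF d t Y ≤ n := by
  apply csSup_le
  · exact ⟨-1, ∅, by simp⟩
  · rintro v ⟨S, h1, h2, rfl⟩
    exact h S h1 h2

lemma le_dimF {Y : Set X} {n : ℝ} (S : Finset X) (h1 : ↑S ⊆ Y)
    (h2 : ∀ s ∈ S, ∀ s' ∈ S, d s s' ≤ t)
    (hb : ∀ S' : Finset X, ↑S' ⊆ Y → (∀ s ∈ S', ∀ s' ∈ S', d s s' ≤ t) →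
      (S'.card : ℝ) - 1 ≤ n)
    : (S.card : ℝ) - 1 ≤ dimF d t Y := by
  apply le_csSup
  · exact ⟨n, by rintro v ⟨S', h1', h2', rfl⟩; exact hb S' h1' h2'⟩
  · exact ⟨S, h1, h2, rfl⟩

lemma dimF_singleton (hd0 : ∀ x, d x x = 0) (ht : 0 ≤ t) (x : X) :
    dimF d t {x} = 0 := by
  have hub : ∀ S : Finset X, ↑S ⊆ ({x} : Set X) →
      (∀ s ∈ S, ∀ s' ∈ S, d s s' ≤ t) → (S.card : ℝ) - 1 ≤ 0 := by
    intro S hS _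
    have : S ⊆ {x} := by
      intro s hs
      have := hS hs
      simpa using this
    have := Finset.card_le_card this
    simp only [Finset.card_singleton] at this
    have : (S.card : ℝ) ≤ 1 := by exact_mod_cast this
    linarith
  refine le_antisymm (dimF_le hub) ?_
  have := le_dimF (d := d) (t := t) ({x} : Finset X) (by simp)
    (by intro s hs s' hs'; simp only [Finset.mem_singleton] at hs hs'; subst hs; subst hs';
        rw [hd0]; exact ht) hub
  simpa using this

end Generic

end SLnot
namespace SLnot

lemma sort_pair {a b : ℝ} (h : a < b) :
    Finset.sort ({a, b} : Finset ℝ) (· ≤ ·) = [a, b] := by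
  have h2 : a ∉ ({b} : Finset ℝ) := by simp [ne_of_lt h]
  have h1 : ∀ c ∈ ({b} : Finset ℝ), a ≤ c := by simp [h.le]
  rw [Finset.sort_insert (α := ℝ) (· ≤ ·) h1 h2, Finset.sort_singleton]

lemma sort_triple {a b c : ℝ} (hab : a < b) (hbc : b < c) :
    Finset.sort ({a, b, c} : Finset ℝ) (· ≤ ·) = [a, b, c] := by
  have h2 : a ∉ ({b, c} : Finset ℝ) := by
    simp [ne_of_lt hab, ne_of_lt (hab.trans hbc)]
  have h1 : ∀ x ∈ ({b, c} : Finset ℝ), a ≤ x := by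
    intro x hx
    simp only [Finset.mem_insert, Finset.mem_singleton] at hx
    rcases hx with rfl | rfl
    · exact hab.le
    · exact (hab.trans hbc).le
  rw [Finset.sort_insert (α := ℝ) (· ≤ ·) h1 h2, sort_pair hbc]

lemma sort_quad {a b c e : ℝ} (hab : a < b) (hbc : b < c) (hce : c < e) :
    Finset.sort ({a, b, c, e} : Finset ℝ) (· ≤ ·) = [a, b, c, e] := by
  have h2 : a ∉ ({b, c, e} : Finset ℝ) := by
    simp [ne_of_lt hab, ne_of_lt (hab.trans hbc), ne_of_lt ((hab.trans hbc).trans hce)]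
  have h1 : ∀ x ∈ ({b, c, e} : Finset ℝ), a ≤ x := by
    intro x hx
    simp only [Finset.mem_insert, Finset.mem_singleton] at hx
    rcases hx with rfl | rfl | rfl
    · exact hab.le
    · exact (hab.trans hbc).le
    · exact ((hab.trans hbc).trans hce).le
  rw [Finset.sort_insert (α := ℝ) (· ≤ ·) h1 h2, sort_triple hbc hce]

lemma sort_quint {a b c e f : ℝ} (hab : a < b) (hbc : b < c) (hce : c < e) (hef : e < f) :
    Finset.sort ({a, b, c, e, f} : Finset ℝ) (· ≤ ·) = [a, b, c, e, f] := by
  have h2 : a ∉ ({b, c, e, f} : Finset ℝ) := by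
    simp [ne_of_lt hab, ne_of_lt (hab.trans hbc), ne_of_lt ((hab.trans hbc).trans hce),
      ne_of_lt (((hab.trans hbc).trans hce).trans hef)]
  have h1 : ∀ x ∈ ({b, c, e, f} : Finset ℝ), a ≤ x := by
    intro x hx
    simp only [Finset.mem_insert, Finset.mem_singleton] at hx
    rcases hx with rfl | rfl | rfl | rfl
    · exact hab.le
    · exact (hab.trans hbc).le
    · exact ((hab.trans hbc).trans hce).le
    · exact (((hab.trans hbc).trans hce).trans hef).le
  rw [Finset.sort_insert (α := ℝ) (· ≤ ·) h1 h2, sort_quad hbc hce hef]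

lemma image_dN : Finset.image (fun p : Fin 8 × Fin 8 => dN p.1 p.2) Finset.univ
    = ({0, 1, 2, 3} : Finset ℕ) := by decide

lemma image_dd : Finset.image (fun p : Fin 8 × Fin 8 => dd p.1 p.2) Finset.univ
    = ({0, 1, 2, 3} : Finset ℝ) := by
  have h : (fun p : Fin 8 × Fin 8 => dd p.1 p.2)
      = (Nat.cast : ℕ → ℝ) ∘ (fun p : Fin 8 × Fin 8 => dN p.1 p.2) := rfl
  rw [h, ← Finset.image_image, image_dN]
  norm_num [Finset.image_insert]

lemma distVals_dd_1 {t : ℝ} (h0 : 0 ≤ t) (h1 : t < 1) : distVals dd t = [0] := by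
  unfold distVals
  rw [image_dd]
  have e : ({0, 1, 2, 3} : Finset ℝ).filter (· ≤ t) = {0} := by
    simp [Finset.filter_insert, Finset.filter_singleton, h0, not_le.mpr h1,
      not_le.mpr (by linarith : t < 2), not_le.mpr (by linarith : t < 3)]
  rw [e, Finset.sort_singleton]

lemma distVals_dd_2 {t : ℝ} (h0 : 1 ≤ t) (h1 : t < 2) : distVals dd t = [0, 1] := by
  unfold distVals
  rw [image_dd]
  have e : ({0, 1, 2, 3} : Finset ℝ).filter (· ≤ t) = {0, 1} := by
    simp [Finset.filter_insert, Finset.filter_singleton, (by linarith : (0:ℝ) ≤ t), h0,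
      not_le.mpr h1, not_le.mpr (by linarith : t < 3)]
  rw [e, sort_pair (by norm_num)]

lemma distVals_dd_3 {t : ℝ} (h0 : 2 ≤ t) (h1 : t < 3) : distVals dd t = [0, 1, 2] := by
  unfold distVals
  rw [image_dd]
  have e : ({0, 1, 2, 3} : Finset ℝ).filter (· ≤ t) = {0, 1, 2} := by
    simp [Finset.filter_insert, Finset.filter_singleton, (by linarith : (0:ℝ) ≤ t),
      (by linarith : (1:ℝ) ≤ t), h0, not_le.mpr h1]
  rw [e, sort_triple (by norm_num) (by norm_num)]

lemma distVals_dd_4 {t : ℝ} (h0 : 3 ≤ t) : distVals dd t = [0, 1, 2, 3] := by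
  unfold distVals
  rw [image_dd]
  have e : ({0, 1, 2, 3} : Finset ℝ).filter (· ≤ t) = {0, 1, 2, 3} := by
    simp [Finset.filter_insert, Finset.filter_singleton, (by linarith : (0:ℝ) ≤ t),
      (by linarith : (1:ℝ) ≤ t), (by linarith : (2:ℝ) ≤ t), h0]
  rw [e, sort_quad (by norm_num) (by norm_num) (by norm_num)]

end SLnot
namespace SLnot

lemma image_pairN : Finset.image (fun p : Fin 8 × Fin 8 => (dN p.1 p.2, cN p.1 p.2))
    Finset.univ = ({(0, 0), (1, 0), (1, 1), (2, 1), (3, 1)} : Finset (ℕ × ℕ)) := by decide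

lemma image_dd' (ε : ℝ) : Finset.image (fun p : Fin 8 × Fin 8 => dd' ε p.1 p.2) Finset.univ
    = ({0, 1, 1 + ε, 2 + ε, 3 + ε} : Finset ℝ) := by
  have h : (fun p : Fin 8 × Fin 8 => dd' ε p.1 p.2)
      = (fun q : ℕ × ℕ => (q.1 : ℝ) + ε * (q.2 : ℝ))
        ∘ (fun p : Fin 8 × Fin 8 => (dN p.1 p.2, cN p.1 p.2)) := rfl
  rw [h, ← Finset.image_image, image_pairN]
  norm_num [Finset.image_insert]

end SLnot
namespace SLnot

lemma distVals_dd'_1 {ε t : ℝ} (hε : 0 < ε) (h0 : 0 ≤ t) (h1 : t < 1) :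
    distVals (dd' ε) t = [0] := by
  unfold distVals
  rw [image_dd']
  have e : ({0, 1, 1 + ε, 2 + ε, 3 + ε} : Finset ℝ).filter (· ≤ t) = {0} := by
    simp [Finset.filter_insert, Finset.filter_singleton, h0, not_le.mpr h1,
      not_le.mpr (by linarith : t < 1 + ε), not_le.mpr (by linarith : t < 2 + ε),
      not_le.mpr (by linarith : t < 3 + ε)]
  rw [e, Finset.sort_singleton]

lemma distVals_dd'_2 {ε t : ℝ} (hε : 0 < ε) (h0 : 1 ≤ t) (h1 : t < 1 + ε) :
    distVals (dd' ε) t = [0, 1] := by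
  unfold distVals
  rw [image_dd']
  have e : ({0, 1, 1 + ε, 2 + ε, 3 + ε} : Finset ℝ).filter (· ≤ t) = {0, 1} := by
    simp [Finset.filter_insert, Finset.filter_singleton, (by linarith : (0:ℝ) ≤ t), h0,
      not_le.mpr h1, not_le.mpr (by linarith : t < 2 + ε), not_le.mpr (by linarith : t < 3 + ε)]
  rw [e, sort_pair (by norm_num)]

lemma distVals_dd'_3 {ε t : ℝ} (hε : 0 < ε) (h0 : 1 + ε ≤ t) (h1 : t < 2 + ε) :
    distVals (dd' ε) t = [0, 1, 1 + ε] := by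
  unfold distVals
  rw [image_dd']
  have e : ({0, 1, 1 + ε, 2 + ε, 3 + ε} : Finset ℝ).filter (· ≤ t) = {0, 1, 1 + ε} := by
    simp [Finset.filter_insert, Finset.filter_singleton, (by linarith : (0:ℝ) ≤ t),
      (by linarith : (1:ℝ) ≤ t), h0, not_le.mpr h1, not_le.mpr (by linarith : t < 3 + ε)]
  rw [e, sort_triple (by norm_num) (by linarith)]

lemma distVals_dd'_4 {ε t : ℝ} (hε : 0 < ε) (h0 : 2 + ε ≤ t) (h1 : t < 3 + ε) :
    distVals (dd' ε) t = [0, 1, 1 + ε, 2 + ε] := by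
  unfold distVals
  rw [image_dd']
  have e : ({0, 1, 1 + ε, 2 + ε, 3 + ε} : Finset ℝ).filter (· ≤ t) = {0, 1, 1 + ε, 2 + ε} := by
    simp [Finset.filter_insert, Finset.filter_singleton, (by linarith : (0:ℝ) ≤ t),
      (by linarith : (1:ℝ) ≤ t), (by linarith : 1 + ε ≤ t), h0, not_le.mpr h1]
  rw [e, sort_quad (by norm_num) (by linarith) (by linarith)]

lemma distVals_dd'_5 {ε t : ℝ} (hε : 0 < ε) (h0 : 3 + ε ≤ t) :
    distVals (dd' ε) t = [0, 1, 1 + ε, 2 + ε, 3 + ε] := by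
  unfold distVals
  rw [image_dd']
  have e : ({0, 1, 1 + ε, 2 + ε, 3 + ε} : Finset ℝ).filter (· ≤ t)
      = {0, 1, 1 + ε, 2 + ε, 3 + ε} := by
    simp [Finset.filter_insert, Finset.filter_singleton, (by linarith : (0:ℝ) ≤ t),
      (by linarith : (1:ℝ) ≤ t), (by linarith : 1 + ε ≤ t), (by linarith : 2 + ε ≤ t), h0]
  rw [e, sort_quint (by norm_num) (by linarith) (by linarith) (by linarith)]

end SLnot
namespace SLnot

lemma mem_singletons {X : Type} {B : Set X} : B ∈ singletons X ↔ ∃ x, B = {x} := Iff.rfl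

lemma sUnion_singletons (X : Type) : ⋃₀ (singletons X) = Set.univ := by
  ext x
  simp only [Set.mem_sUnion, Set.mem_univ, iff_true]
  exact ⟨{x}, ⟨x, rfl⟩, rfl⟩

lemma singletons_nonempty (X : Type) [Inhabited X] : (singletons X).Nonempty :=
  ⟨{default}, default, rfl⟩

lemma no_edge_far {X : Type} {f : X → X → ℝ} {α t : ℝ}
    (h : ∀ a b : X, a ≠ b → ¬ f a b ≤ t) :
    ∀ B B', ¬ IsEdge f α t (singletons X) B B' := by
  rintro B B' ⟨⟨a, rfl⟩, ⟨b, rfl⟩, hne, ⟨x, hx, y, hy, hxy⟩, -⟩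
  rw [Set.mem_singleton_iff] at hx hy
  subst hx; subst hy
  exact h x y (fun hxyeq => hne (by rw [hxyeq])) hxy

lemma isEdge_of_pair {X : Type} [DecidableEq X] {f : X → X → ℝ} {t : ℝ}
    (hf0 : ∀ x, f x x = 0) (hsym : ∀ x y, f x y = f y x) (ht : 0 ≤ t)
    {a b : X} (hab : a ≠ b) (hd : f a b ≤ t) :
    IsEdge f 1 t (singletons X) {a} {b} := by
  have hcard : ({a, b} : Finset X).card = 2 := by
    rw [Finset.card_insert_of_notMem (by simp [hab]), Finset.card_singleton]
  refine ⟨⟨a, rfl⟩, ⟨b, rfl⟩, fun h => hab (Set.singleton_eq_singleton_iff.mp h),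
    ⟨a, rfl, b, rfl, hd⟩, ({a, b} : Finset X), by intro x hx; simp at hx ⊢; tauto, ⟨a, by simp, rfl⟩,
    ⟨b, by simp, rfl⟩, ?_, ?_⟩
  · intro s hs s' hs'
    simp only [Finset.mem_insert, Finset.mem_singleton] at hs hs'
    rcases hs with rfl | rfl <;> rcases hs' with rfl | rfl
    · rw [hf0]; exact ht
    · exact hd
    · rw [hsym]; exact hd
    · rw [hf0]; exact ht
  · rw [dimF_singleton hf0 ht, dimF_singleton hf0 ht, hcard]
    norm_num

lemma dd_le_iff {a b : Fin 8} {n : ℕ} : dd a b ≤ (n : ℝ) ↔ dN a b ≤ n := by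
  simp only [dd]
  exact_mod_cast Iff.rfl

lemma mergeStep_dd_zero : mergeStep dd 1 0 (singletons (Fin 8)) = singletons (Fin 8) := by
  apply mergeStep_of_no_edge
  apply no_edge_far
  intro a b hab h
  have h1 : (1 : ℝ) ≤ dd a b := by
    have := one_le_dN a b hab
    simp only [dd]
    exact_mod_cast this
  linarith

lemma dd'_cross_far {ε : ℝ} (hε : 0 < ε) {a b : Fin 8} (hc : cN a b = 1) :
    ¬ dd' ε a b ≤ 1 := by
  have h1 : (1 : ℝ) ≤ (dN a b : ℝ) := by
    have : a ≠ b := by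
      intro h; subst h; simp [cN_self] at hc
    exact_mod_cast one_le_dN a b this
  simp only [dd', hc]
  push_cast
  intro h
  linarith

lemma mergeStep_dd'_zero {ε : ℝ} (hε : 0 < ε) :
    mergeStep (dd' ε) 1 0 (singletons (Fin 8)) = singletons (Fin 8) := by
  apply mergeStep_of_no_edge
  apply no_edge_far
  intro a b hab h
  have h1 : (1 : ℝ) ≤ (dN a b : ℝ) := by exact_mod_cast one_le_dN a b hab
  have h2 : (0:ℝ) ≤ ε * (cN a b : ℝ) := by positivity
  simp only [dd'] at h
  linarith

lemma mergeStep_dd_one : mergeStep dd 1 1 (singletons (Fin 8)) = {Set.univ} := by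
  rw [← sUnion_singletons (Fin 8)]
  apply mergeStep_of_conn (singletons_nonempty _)
  have key : ∀ a b : Fin 8, a ≠ b → dN a b = 1 →
      SameComp dd 1 1 (singletons (Fin 8)) {a} {b} := by
    intro a b hab h
    exact ReflTransGen.single (isEdge_of_pair (fun x => by simp [dd, dN_self])
      (fun x y => by simp [dd, dN_symm x y]) zero_le_one hab
      (by rw [show (1:ℝ) = ((1:ℕ):ℝ) by norm_num, dd_le_iff, h]))
  have hub : ∀ a : Fin 8, SameComp dd 1 1 (singletons (Fin 8)) {0} {a} := by
    intro a
    by_cases h0 : a = 0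
    · subst h0; exact ReflTransGen.refl
    by_cases h4 : a = 4
    · subst h4; exact key 0 4 (by decide) (by decide)
    have hfacts : (((a:ℕ) < 4 → dN 0 a = 1) ∧ (¬ (a:ℕ) < 4 → dN 4 a = 1)) := by
      revert h0 h4; revert a; decide
    by_cases hs : (a:ℕ) < 4
    · exact key 0 a (Ne.symm h0) (hfacts.1 hs)
    · exact (key 0 4 (by decide) (by decide)).trans (key 4 a (Ne.symm h4) (hfacts.2 hs))
  rintro B ⟨a, rfl⟩ B' ⟨b, rfl⟩
  have hsym : ∀ x y, dd x y = dd y x := fun x y => by simp [dd, dN_symm x y]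
  exact (sameComp_symm hsym (hub a)).trans (hub b)

end SLnot
namespace SLnot

def S0 : Set (Fin 8) := {i | (i : ℕ) < 4}
def S1 : Set (Fin 8) := {i | ¬ (i : ℕ) < 4}

def F0 : Finset (Fin 8) := {0, 1, 2, 3}
def F1 : Finset (Fin 8) := {4, 5, 6, 7}

lemma mem_F0 : ∀ i : Fin 8, i ∈ F0 ↔ (i : ℕ) < 4 := by decide
lemma mem_F1 : ∀ i : Fin 8, i ∈ F1 ↔ ¬ (i : ℕ) < 4 := by decide

lemma dd'_same_side {ε : ℝ} {a b : Fin 8} (h : ((a:ℕ) < 4 ↔ (b:ℕ) < 4)) :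
    dd' ε a b ≤ 1 := by
  have hc : cN a b = 0 := by simp [cN, h]
  have hdn : dN a b ≤ 1 := by
    by_cases hab : a = b
    · subst hab; simp [dN_self]
    · simp [dN, hab, h]
  simp only [dd', hc]
  push_cast
  have : (dN a b : ℝ) ≤ 1 := by exact_mod_cast hdn
  linarith

lemma dd'_cross_eq {ε : ℝ} {a b : Fin 8} (h : ¬ ((a:ℕ) < 4 ↔ (b:ℕ) < 4)) :
    dd' ε a b = (dN a b : ℝ) + ε ∧ 1 ≤ dN a b := by
  have hc : cN a b = 1 := by simp [cN, h]
  have hab : a ≠ b := fun he => h (by rw [he])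
  constructor
  · simp [dd', hc]
  · exact one_le_dN a b hab

lemma dd'_symm (ε : ℝ) : ∀ x y : Fin 8, dd' ε x y = dd' ε y x :=
  fun x y => by simp [dd', dN_symm x y, cN_symm x y]

lemma dd'_self (ε : ℝ) : ∀ x : Fin 8, dd' ε x x = 0 :=
  fun x => by simp [dd', dN_self, cN_self]

/-- blocks same-component-related to `{a}` at scale 1 are singletons on the same side -/
lemma sameComp_side {ε : ℝ} (hε : 0 < ε) {a : Fin 8} {B : Set (Fin 8)}
    (h : SameComp (dd' ε) 1 1 (singletons (Fin 8)) {a} B) :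
    ∃ b : Fin 8, B = {b} ∧ ((a:ℕ) < 4 ↔ (b:ℕ) < 4) := by
  induction h with
  | refl => exact ⟨a, rfl, Iff.rfl⟩
  | tail _ he ih =>
    obtain ⟨c, rfl, hc⟩ := ih
    obtain ⟨-, ⟨c', rfl⟩, -, ⟨x, hx, y, hy, hxy⟩, -⟩ := he
    rw [Set.mem_singleton_iff] at hx hy
    subst hx; subst hy
    refine ⟨y, rfl, ?_⟩
    by_contra hside
    have : ¬ ((x:ℕ) < 4 ↔ (y:ℕ) < 4) := fun hh => hside (hc.trans hh)
    obtain ⟨he1, he2⟩ := dd'_cross_eq (ε := ε) this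
    have : (1:ℝ) ≤ (dN x y : ℝ) := by exact_mod_cast he2
    rw [he1] at hxy
    linarith

lemma mergeStep_dd'_one {ε : ℝ} (hε : 0 < ε) :
    mergeStep (dd' ε) 1 1 (singletons (Fin 8)) = {S0, S1} := by
  have hedge : ∀ a b : Fin 8, a ≠ b → ((a:ℕ) < 4 ↔ (b:ℕ) < 4) →
      SameComp (dd' ε) 1 1 (singletons (Fin 8)) {a} {b} := by
    intro a b hab h
    exact ReflTransGen.single (isEdge_of_pair (dd'_self ε) (dd'_symm ε) zero_le_one hab
      (dd'_same_side h))
  have hU : ∀ a : Fin 8,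
      ⋃₀ {B' | B' ∈ singletons (Fin 8) ∧ SameComp (dd' ε) 1 1 (singletons (Fin 8)) {a} B'}
      = {b : Fin 8 | (a:ℕ) < 4 ↔ (b:ℕ) < 4} := by
    intro a
    ext z
    simp only [Set.mem_sUnion, Set.mem_setOf_eq]
    constructor
    · rintro ⟨B', ⟨-, hsc⟩, hz⟩
      obtain ⟨b, rfl, hside⟩ := sameComp_side hε hsc
      rw [Set.mem_singleton_iff] at hz
      subst hz
      exact hside
    · intro hside
      refine ⟨{z}, ⟨⟨z, rfl⟩, ?_⟩, rfl⟩
      by_cases hz : z = a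
      · subst hz; exact ReflTransGen.refl
      · exact hedge a z (Ne.symm hz) hside
  ext C
  simp only [mergeStep, Set.mem_setOf_eq, Set.mem_insert_iff, Set.mem_singleton_iff]
  constructor
  · rintro ⟨B, ⟨a, rfl⟩, rfl⟩
    rw [hU a]
    by_cases ha : (a:ℕ) < 4
    · left
      ext z
      simp [S0, ha]
    · right
      ext z
      simp [S1, ha]
  · rintro (rfl | rfl)
    · refine ⟨{0}, ⟨0, rfl⟩, ?_⟩
      rw [hU 0]
      ext z
      simp only [S0, Set.mem_setOf_eq]
      revert z; decide
    · refine ⟨{4}, ⟨4, rfl⟩, ?_⟩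
      rw [hU 4]
      ext z
      simp only [S1, Set.mem_setOf_eq]
      revert z; decide

end SLnot
namespace SLnot

lemma F0_pair : ∀ s ∈ F0, ∀ s' ∈ F0, dN s s' ≤ 1 ∧ cN s s' = 0 := by decide
lemma F1_pair : ∀ s ∈ F1, ∀ s' ∈ F1, dN s s' ≤ 1 ∧ cN s s' = 0 := by decide

lemma dd'_F0_le {ε : ℝ} {t : ℝ} (ht : 1 ≤ t) :
    ∀ s ∈ F0, ∀ s' ∈ F0, dd' ε s s' ≤ t := by
  intro s hs s' hs'
  obtain ⟨h1, h2⟩ := F0_pair s hs s' hs'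
  have : (dN s s' : ℝ) ≤ 1 := by exact_mod_cast h1
  simp only [dd', h2]
  push_cast
  linarith

lemma dd'_F1_le {ε : ℝ} {t : ℝ} (ht : 1 ≤ t) :
    ∀ s ∈ F1, ∀ s' ∈ F1, dd' ε s s' ≤ t := by
  intro s hs s' hs'
  obtain ⟨h1, h2⟩ := F1_pair s hs s' hs'
  have : (dN s s' : ℝ) ≤ 1 := by exact_mod_cast h1
  simp only [dd', h2]
  push_cast
  linarith

lemma subset_F0 {S : Finset (Fin 8)} (h : ↑S ⊆ S0) : S ⊆ F0 := by
  intro s hs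
  rw [mem_F0]
  exact h hs

lemma subset_F1 {S : Finset (Fin 8)} (h : ↑S ⊆ S1) : S ⊆ F1 := by
  intro s hs
  rw [mem_F1]
  exact h hs

lemma dimF_ub_S0 {f : Fin 8 → Fin 8 → ℝ} {t : ℝ} : dimF f t S0 ≤ 3 := by
  apply dimF_le
  intro S hS _
  have : S.card ≤ 4 := by
    have := Finset.card_le_card (subset_F0 hS)
    simpa [F0] using this
  have : (S.card : ℝ) ≤ 4 := by exact_mod_cast this
  linarith

lemma dimF_ub_S1 {f : Fin 8 → Fin 8 → ℝ} {t : ℝ} : dimF f t S1 ≤ 3 := by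
  apply dimF_le
  intro S hS _
  have : S.card ≤ 4 := by
    have := Finset.card_le_card (subset_F1 hS)
    simpa [F1] using this
  have : (S.card : ℝ) ≤ 4 := by exact_mod_cast this
  linarith

lemma dimF_S0 {ε t : ℝ} (ht : 1 ≤ t) : dimF (dd' ε) t S0 = 3 := by
  refine le_antisymm dimF_ub_S0 ?_
  have h := le_dimF (d := dd' ε) (t := t) (Y := S0) (n := 3) F0
    (by intro s hs; rw [Finset.mem_coe, mem_F0] at hs; exact hs)
    (dd'_F0_le ht)
    (by intro S hS _
        have : S.card ≤ 4 := by
          have := Finset.card_le_card (subset_F0 hS)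
          simpa [F0] using this
        have : (S.card : ℝ) ≤ 4 := by exact_mod_cast this
        linarith)
  have hc : F0.card = 4 := by decide
  have hc' : (F0.card : ℝ) = 4 := by exact_mod_cast hc
  rw [hc'] at h
  linarith

lemma dimF_S1 {ε t : ℝ} (ht : 1 ≤ t) : dimF (dd' ε) t S1 = 3 := by
  refine le_antisymm dimF_ub_S1 ?_
  have h := le_dimF (d := dd' ε) (t := t) (Y := S1) (n := 3) F1
    (by intro s hs; rw [Finset.mem_coe, mem_F1] at hs; exact hs)
    (dd'_F1_le ht)
    (by intro S hS _
        have : S.card ≤ 4 := by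
          have := Finset.card_le_card (subset_F1 hS)
          simpa [F1] using this
        have : (S.card : ℝ) ≤ 4 := by exact_mod_cast this
        linarith)
  have hc : F1.card = 4 := by decide
  have hc' : (F1.card : ℝ) = 4 := by exact_mod_cast hc
  rw [hc'] at h
  linarith

lemma cross_close {s b : Fin 8} (hs : (s:ℕ) < 4) (hb : ¬ (b:ℕ) < 4) (h : dN s b ≤ 1) :
    s = 0 ∧ b = 4 := by
  revert hs hb h; revert s b; decide

/-- no edge between S0 and S1 at scale 1+ε -/
lemma no_edge_dd'_oneps {ε : ℝ} (hε : 0 < ε) :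
    ¬ IsEdge (dd' ε) 1 (1 + ε) {S0, S1} S0 S1 := by
  rintro ⟨-, -, -, -, S, hSsub, ⟨sa, hsaS, hsa⟩, ⟨sb, hsbS, hsb⟩, hpw, hmin⟩
  rw [dimF_S0 (by linarith), dimF_S1 (by linarith), min_self] at hmin
  -- every element of S is 0 or 4
  have hkey : ∀ s ∈ S, s = 0 ∨ s = 4 := by
    intro s hsS
    have hs04 : s ∈ S0 ∪ S1 := hSsub hsS
    rcases hs04 with hs0 | hs1
    · left
      have hcross : ¬ ((s:ℕ) < 4 ↔ (sb:ℕ) < 4) := by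
        simp only [S0, Set.mem_setOf_eq] at hs0
        simp only [S1, Set.mem_setOf_eq] at hsb
        tauto
      obtain ⟨he1, -⟩ := dd'_cross_eq (ε := ε) hcross
      have hle := hpw s hsS sb hsbS
      rw [he1] at hle
      have : (dN s sb : ℝ) ≤ 1 := by linarith
      have hdn : dN s sb ≤ 1 := by exact_mod_cast this
      exact (cross_close (by simpa [S0] using hs0) (by simpa [S1] using hsb) hdn).1
    · right
      have hcross : ¬ ((sa:ℕ) < 4 ↔ (s:ℕ) < 4) := by
        simp only [S0, Set.mem_setOf_eq] at hsa
        simp only [S1, Set.mem_setOf_eq] at hs1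
        tauto
      obtain ⟨he1, -⟩ := dd'_cross_eq (ε := ε) hcross
      have hle := hpw sa hsaS s hsS
      rw [he1] at hle
      have : (dN sa s : ℝ) ≤ 1 := by linarith
      have hdn : dN sa s ≤ 1 := by exact_mod_cast this
      exact (cross_close (by simpa [S0] using hsa) (by simpa [S1] using hs1) hdn).2
  have hsub : S ⊆ ({0, 4} : Finset (Fin 8)) := by
    intro s hs
    rcases hkey s hs with rfl | rfl <;> simp
  have hcard : S.card ≤ 2 := by
    have := Finset.card_le_card hsub
    simpa using this
  have : (S.card : ℝ) ≤ 2 := by exact_mod_cast hcard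
  linarith

lemma S0_ne_S1 : S0 ≠ S1 := by
  intro h
  have h0 : (0 : Fin 8) ∈ S0 := by simp [S0]
  rw [h] at h0
  simp [S1] at h0

lemma mergeStep_dd'_oneps {ε : ℝ} (hε : 0 < ε) :
    mergeStep (dd' ε) 1 (1 + ε) {S0, S1} = {S0, S1} := by
  apply mergeStep_of_no_edge
  intro B B' hedge
  have h1 := hedge.1
  have h2 := hedge.2.1
  have h3 := hedge.2.2.1
  simp only [Set.mem_insert_iff, Set.mem_singleton_iff] at h1 h2
  rcases h1 with rfl | rfl <;> rcases h2 with rfl | rfl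
  · exact h3 rfl
  · exact no_edge_dd'_oneps hε hedge
  · exact no_edge_dd'_oneps hε (isEdge_symm (dd'_symm ε) hedge)
  · exact h3 rfl

def F5 : Finset (Fin 8) := {0, 1, 2, 3, 4}

lemma F5_pair : ∀ s ∈ F5, ∀ s' ∈ F5, dN s s' ≤ 2 ∧ cN s s' ≤ 1 := by decide

lemma sUnion_S0S1 : ⋃₀ ({S0, S1} : Set (Set (Fin 8))) = Set.univ := by
  ext x
  simp only [Set.sUnion_insert, Set.sUnion_singleton, Set.mem_union, Set.mem_univ, iff_true]
  by_cases h : (x:ℕ) < 4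
  · left; exact h
  · right; exact h

lemma mergeStep_dd'_twoeps {ε : ℝ} (hε : 0 < ε) :
    mergeStep (dd' ε) 1 (2 + ε) {S0, S1} = {Set.univ} := by
  rw [← sUnion_S0S1]
  apply mergeStep_of_conn ⟨S0, by simp⟩
  have hedge : IsEdge (dd' ε) 1 (2 + ε) {S0, S1} S0 S1 := by
    refine ⟨by simp, by simp, S0_ne_S1, ⟨0, by simp [S0], 4, by simp only [S1, Set.mem_setOf_eq]; decide, ?_⟩,
      F5, ?_, ⟨0, by decide, by simp [S0]⟩, ⟨4, by decide, by simp only [S1, Set.mem_setOf_eq]; decide⟩, ?_, ?_⟩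
    · have : cN 0 4 = 1 ∧ dN 0 4 = 1 := by decide
      simp only [dd', this.1, this.2]
      push_cast
      linarith
    · intro s hs
      simp only [Set.mem_union, S0, S1, Set.mem_setOf_eq]
      tauto
    · intro s hs s' hs'
      obtain ⟨h1, h2⟩ := F5_pair s hs s' hs'
      have h1' : (dN s s' : ℝ) ≤ 2 := by exact_mod_cast h1
      have h2' : (cN s s' : ℝ) ≤ 1 := by exact_mod_cast h2
      have : ε * (cN s s' : ℝ) ≤ ε * 1 := mul_le_mul_of_nonneg_left h2' hε.le
      simp only [dd']
      linarith
    · have hc : F5.card = 5 := by decide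
      have hc' : (F5.card : ℝ) = 5 := by exact_mod_cast hc
      rw [hc']
      calc min (dimF (dd' ε) (2 + ε) S0) (dimF (dd' ε) (2 + ε) S1)
          ≤ dimF (dd' ε) (2 + ε) S0 := min_le_left _ _
        _ ≤ 3 := dimF_ub_S0
        _ ≤ 1 * (5 - 1) := by norm_num
  have hcomp : SameComp (dd' ε) 1 (2 + ε) {S0, S1} S0 S1 := ReflTransGen.single hedge
  rintro B hB B' hB'
  simp only [Set.mem_insert_iff, Set.mem_singleton_iff] at hB hB'
  rcases hB with rfl | rfl <;> rcases hB' with rfl | rfl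
  · exact ReflTransGen.refl
  · exact hcomp
  · exact sameComp_symm (dd'_symm ε) hcomp
  · exact ReflTransGen.refl

end SLnot
namespace SLnot

lemma theta_dd_lt1 {t : ℝ} (h0 : 0 ≤ t) (h1 : t < 1) :
    theta dd 1 t = singletons (Fin 8) := by
  unfold theta
  rw [distVals_dd_1 h0 h1]
  simp only [List.foldl]
  exact mergeStep_dd_zero

lemma theta_dd_ge1 {t : ℝ} (h : 1 ≤ t) : theta dd 1 t = {Set.univ} := by
  unfold theta
  rcases lt_or_ge t 2 with h2 | h2
  · rw [distVals_dd_2 h h2]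
    simp only [List.foldl]
    rw [mergeStep_dd_zero, mergeStep_dd_one]
  rcases lt_or_ge t 3 with h3 | h3
  · rw [distVals_dd_3 h2 h3]
    simp only [List.foldl]
    rw [mergeStep_dd_zero, mergeStep_dd_one, mergeStep_single]
  · rw [distVals_dd_4 h3]
    simp only [List.foldl]
    rw [mergeStep_dd_zero, mergeStep_dd_one, mergeStep_single, mergeStep_single]

lemma theta_dd'_lt1 {ε t : ℝ} (hε : 0 < ε) (h0 : 0 ≤ t) (h1 : t < 1) :
    theta (dd' ε) 1 t = singletons (Fin 8) := by
  unfold theta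
  rw [distVals_dd'_1 hε h0 h1]
  simp only [List.foldl]
  exact mergeStep_dd'_zero hε

lemma theta_dd'_mid {ε t : ℝ} (hε : 0 < ε) (h0 : 1 ≤ t) (h1 : t < 2 + ε) :
    theta (dd' ε) 1 t = {S0, S1} := by
  unfold theta
  rcases lt_or_ge t (1 + ε) with h2 | h2
  · rw [distVals_dd'_2 hε h0 h2]
    simp only [List.foldl]
    rw [mergeStep_dd'_zero hε, mergeStep_dd'_one hε]
  · rw [distVals_dd'_3 hε h2 h1]
    simp only [List.foldl]
    rw [mergeStep_dd'_zero hε, mergeStep_dd'_one hε, mergeStep_dd'_oneps hε]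

lemma theta_dd'_ge {ε t : ℝ} (hε : 0 < ε) (h0 : 2 + ε ≤ t) :
    theta (dd' ε) 1 t = {Set.univ} := by
  unfold theta
  rcases lt_or_ge t (3 + ε) with h3 | h3
  · rw [distVals_dd'_4 hε h0 h3]
    simp only [List.foldl]
    rw [mergeStep_dd'_zero hε, mergeStep_dd'_one hε, mergeStep_dd'_oneps hε,
      mergeStep_dd'_twoeps hε]
  · rw [distVals_dd'_5 hε h3]
    simp only [List.foldl]
    rw [mergeStep_dd'_zero hε, mergeStep_dd'_one hε, mergeStep_dd'_oneps hε,
      mergeStep_dd'_twoeps hε, mergeStep_single]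

lemma uAlpha_dd_diag (a : Fin 8) : uAlpha dd 1 a a = 0 := by
  unfold uAlpha
  have hset : {t : ℝ | 0 ≤ t ∧ ∃ B ∈ theta dd 1 t, a ∈ B ∧ a ∈ B} = Set.Ici 0 := by
    ext t
    simp only [Set.mem_setOf_eq, Set.mem_Ici]
    constructor
    · exact fun h => h.1
    · intro ht
      refine ⟨ht, ?_⟩
      rcases lt_or_ge t 1 with h1 | h1
      · rw [theta_dd_lt1 ht h1]
        exact ⟨{a}, ⟨a, rfl⟩, rfl, rfl⟩
      · rw [theta_dd_ge1 h1]
        exact ⟨Set.univ, rfl, Set.mem_univ a, Set.mem_univ a⟩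
  rw [hset, csInf_Ici]

lemma uAlpha_dd_off {a b : Fin 8} (hab : a ≠ b) : uAlpha dd 1 a b = 1 := by
  unfold uAlpha
  have hset : {t : ℝ | 0 ≤ t ∧ ∃ B ∈ theta dd 1 t, a ∈ B ∧ b ∈ B} = Set.Ici 1 := by
    ext t
    simp only [Set.mem_setOf_eq, Set.mem_Ici]
    constructor
    · rintro ⟨h0, B, hB, haB, hbB⟩
      by_contra h1
      push_neg at h1
      rw [theta_dd_lt1 h0 h1] at hB
      obtain ⟨x, rfl⟩ := hB
      rw [Set.mem_singleton_iff] at haB hbB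
      exact hab (haB.trans hbB.symm)
    · intro h1
      refine ⟨by linarith, ?_⟩
      rw [theta_dd_ge1 h1]
      exact ⟨Set.univ, rfl, Set.mem_univ a, Set.mem_univ b⟩
  rw [hset, csInf_Ici]

lemma uAlpha_dd'_diag {ε : ℝ} (hε : 0 < ε) (a : Fin 8) : uAlpha (dd' ε) 1 a a = 0 := by
  unfold uAlpha
  have hset : {t : ℝ | 0 ≤ t ∧ ∃ B ∈ theta (dd' ε) 1 t, a ∈ B ∧ a ∈ B} = Set.Ici 0 := by
    ext t
    simp only [Set.mem_setOf_eq, Set.mem_Ici]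
    constructor
    · exact fun h => h.1
    · intro ht
      refine ⟨ht, ?_⟩
      rcases lt_or_ge t 1 with h1 | h1
      · rw [theta_dd'_lt1 hε ht h1]
        exact ⟨{a}, ⟨a, rfl⟩, rfl, rfl⟩
      rcases lt_or_ge t (2 + ε) with h2 | h2
      · rw [theta_dd'_mid hε h1 h2]
        by_cases hs : (a:ℕ) < 4
        · exact ⟨S0, by simp, hs, hs⟩
        · exact ⟨S1, by simp, hs, hs⟩
      · rw [theta_dd'_ge hε h2]
        exact ⟨Set.univ, rfl, Set.mem_univ a, Set.mem_univ a⟩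
  rw [hset, csInf_Ici]

lemma uAlpha_dd'_same {ε : ℝ} (hε : 0 < ε) {a b : Fin 8} (hab : a ≠ b)
    (hside : ((a:ℕ) < 4 ↔ (b:ℕ) < 4)) : uAlpha (dd' ε) 1 a b = 1 := by
  unfold uAlpha
  have hset : {t : ℝ | 0 ≤ t ∧ ∃ B ∈ theta (dd' ε) 1 t, a ∈ B ∧ b ∈ B} = Set.Ici 1 := by
    ext t
    simp only [Set.mem_setOf_eq, Set.mem_Ici]
    constructor
    · rintro ⟨h0, B, hB, haB, hbB⟩
      by_contra h1
      push_neg at h1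
      rw [theta_dd'_lt1 hε h0 h1] at hB
      obtain ⟨x, rfl⟩ := hB
      rw [Set.mem_singleton_iff] at haB hbB
      exact hab (haB.trans hbB.symm)
    · intro h1
      refine ⟨by linarith, ?_⟩
      rcases lt_or_ge t (2 + ε) with h2 | h2
      · rw [theta_dd'_mid hε h1 h2]
        by_cases hs : (a:ℕ) < 4
        · exact ⟨S0, by simp, hs, hside.mp hs⟩
        · exact ⟨S1, by simp, hs, fun hbs => hs (hside.mpr hbs)⟩
      · rw [theta_dd'_ge hε h2]
        exact ⟨Set.univ, rfl, Set.mem_univ a, Set.mem_univ b⟩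
  rw [hset, csInf_Ici]

lemma uAlpha_dd'_cross {ε : ℝ} (hε : 0 < ε) {a b : Fin 8}
    (hside : ¬ ((a:ℕ) < 4 ↔ (b:ℕ) < 4)) : uAlpha (dd' ε) 1 a b = 2 + ε := by
  have hab : a ≠ b := fun h => hside (by rw [h])
  unfold uAlpha
  have hset : {t : ℝ | 0 ≤ t ∧ ∃ B ∈ theta (dd' ε) 1 t, a ∈ B ∧ b ∈ B}
      = Set.Ici (2 + ε) := by
    ext t
    simp only [Set.mem_setOf_eq, Set.mem_Ici]
    constructor
    · rintro ⟨h0, B, hB, haB, hbB⟩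
      by_contra h2
      push_neg at h2
      rcases lt_or_ge t 1 with h1 | h1
      · rw [theta_dd'_lt1 hε h0 h1] at hB
        obtain ⟨x, rfl⟩ := hB
        rw [Set.mem_singleton_iff] at haB hbB
        exact hab (haB.trans hbB.symm)
      · rw [theta_dd'_mid hε h1 h2] at hB
        simp only [Set.mem_insert_iff, Set.mem_singleton_iff] at hB
        rcases hB with rfl | rfl
        · exact hside ⟨fun _ => hbB, fun _ => haB⟩
        · simp only [S1, Set.mem_setOf_eq] at haB hbB
          exact hside ⟨fun h => absurd h haB, fun h => absurd h hbB⟩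
    · intro h2
      refine ⟨by linarith, ?_⟩
      rw [theta_dd'_ge hε h2]
      exact ⟨Set.univ, rfl, Set.mem_univ a, Set.mem_univ b⟩
  rw [hset, csInf_Ici]

end SLnot
namespace SLnot

lemma ghDist_eval {X : Type} (dA dB : X → X → ℝ) (c M : ℝ)
    (hub : ∀ a a', |dA a a' - dB a a'| ≤ c)
    (hmem : ∃ a a', |dA a a' - dB a a'| = c)
    (hlow : ∀ R : Set (X × X), IsCorrespondence R →
      ∃ p ∈ R, ∃ q ∈ R, c ≤ |dA p.1 q.1 - dB p.2 q.2|)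
    (hM : ∀ a a' b b', |dA a a' - dB b b'| ≤ M) :
    ghDist dA dB = (1 / 2) * c := by
  classical
  set R0 : Set (X × X) := {p | p.1 = p.2} with hR0
  have hcorr : IsCorrespondence R0 := ⟨fun a => ⟨a, rfl⟩, fun b => ⟨b, rfl⟩⟩
  obtain ⟨a0, a0', hmem0⟩ := hmem
  have hub0 : ∀ v ∈ {v : ℝ | ∃ p ∈ R0, ∃ q ∈ R0, v = |dA p.1 q.1 - dB p.2 q.2|}, v ≤ c := by
    rintro v ⟨p, hp, q, hq, rfl⟩
    simp only [hR0, Set.mem_setOf_eq] at hp hq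
    rw [← hp, ← hq]
    exact hub _ _
  have hmemD : c ∈ {v : ℝ | ∃ p ∈ R0, ∃ q ∈ R0, v = |dA p.1 q.1 - dB p.2 q.2|} :=
    ⟨(a0, a0), rfl, (a0', a0'), rfl, hmem0.symm⟩
  have hdist0 : distortion dA dB R0 = c := by
    unfold distortion
    exact le_antisymm (csSup_le ⟨c, hmemD⟩ hub0) (le_csSup ⟨c, hub0⟩ hmemD)
  set V : Set ℝ := {v | ∃ R : Set (X × X), IsCorrespondence R ∧ v = distortion dA dB R}
    with hV
  have hcV : c ∈ V := ⟨R0, hcorr, hdist0.symm⟩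
  have hlowV : ∀ v ∈ V, c ≤ v := by
    rintro v ⟨R, hR, rfl⟩
    obtain ⟨p, hp, q, hq, hc⟩ := hlow R hR
    have hbdd : BddAbove {v : ℝ | ∃ p ∈ R, ∃ q ∈ R, v = |dA p.1 q.1 - dB p.2 q.2|} := by
      refine ⟨M, ?_⟩
      rintro w ⟨p', -, q', -, rfl⟩
      exact hM _ _ _ _
    exact hc.trans (le_csSup hbdd ⟨p, hp, q, hq, rfl⟩)
  have : sInf V = c := le_antisymm (csInf_le ⟨c, hlowV⟩ hcV) (le_csInf ⟨c, hcV⟩ hlowV)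
  unfold ghDist
  rw [← hV, this]

lemma dd_le3 (a b : Fin 8) : dd a b ≤ 3 := by
  have := dN_le3 a b
  simp only [dd]
  exact_mod_cast this

lemma dd_nonneg (a b : Fin 8) : 0 ≤ dd a b := by
  simp only [dd]; positivity

lemma dd'_nonneg {ε : ℝ} (hε : 0 < ε) (a b : Fin 8) : 0 ≤ dd' ε a b := by
  have h2 : (0:ℝ) ≤ ε * (cN a b : ℝ) := by positivity
  have h1 : (0:ℝ) ≤ (dN a b : ℝ) := by positivity
  simp only [dd']; linarith

lemma dd'_le {ε : ℝ} (hε : 0 < ε) (a b : Fin 8) : dd' ε a b ≤ 3 + ε := by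
  have h1 : (dN a b : ℝ) ≤ 3 := by exact_mod_cast dN_le3 a b
  have h2 : (cN a b : ℝ) ≤ 1 := by exact_mod_cast cN_le1 a b
  have h3 : ε * (cN a b : ℝ) ≤ ε * 1 := mul_le_mul_of_nonneg_left h2 hε.le
  simp only [dd']; linarith

lemma ghDist_dd {ε : ℝ} (hε : 0 < ε) : ghDist dd (dd' ε) = ε / 2 := by
  have h := ghDist_eval dd (dd' ε) ε (6 + ε) ?_ ?_ ?_ ?_
  · rw [h]; ring
  · intro a a'
    have he : dd a a' - dd' ε a a' = -(ε * (cN a a' : ℝ)) := by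
      simp only [dd, dd']; ring
    rw [he, abs_neg, abs_of_nonneg (by positivity)]
    have h2 : (cN a a' : ℝ) ≤ 1 := by exact_mod_cast cN_le1 a a'
    nlinarith
  · refine ⟨0, 4, ?_⟩
    have he : dd 0 4 - dd' ε 0 4 = -(ε * (cN 0 4 : ℝ)) := by
      simp only [dd, dd']; ring
    have hc : cN 0 4 = 1 := by decide
    rw [he, hc, abs_neg, abs_of_nonneg (by positivity)]
    norm_num
  · intro R hR
    obtain ⟨a, ha⟩ := hR.2 1
    obtain ⟨a', ha'⟩ := hR.2 5
    refine ⟨(a, 1), ha, (a', 5), ha', ?_⟩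
    have h15 : dd' ε 1 5 = 3 + ε := by
      have h1 : dN 1 5 = 3 := by decide
      have h2 : cN 1 5 = 1 := by decide
      simp [dd', h1, h2]
    simp only [h15]
    have h3 : dd a a' ≤ 3 := dd_le3 a a'
    rw [abs_sub_comm]
    calc ε ≤ (3 + ε) - dd a a' := by linarith
      _ ≤ |(3 + ε) - dd a a'| := le_abs_self _
  · intro a a' b b'
    have h1 := dd_nonneg a a'
    have h2 := dd_le3 a a'
    have h3 := dd'_nonneg hε b b'
    have h4 := dd'_le hε b b'
    rw [abs_le]
    constructor <;> linarith

lemma uAlpha_dd_nonneg (a b : Fin 8) : 0 ≤ uAlpha dd 1 a b := by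
  by_cases h : a = b
  · subst h; rw [uAlpha_dd_diag]
  · rw [uAlpha_dd_off h]; norm_num

lemma uAlpha_dd_le1 (a b : Fin 8) : uAlpha dd 1 a b ≤ 1 := by
  by_cases h : a = b
  · subst h; rw [uAlpha_dd_diag]; norm_num
  · rw [uAlpha_dd_off h]

lemma uAlpha_dd'_nonneg {ε : ℝ} (hε : 0 < ε) (a b : Fin 8) : 0 ≤ uAlpha (dd' ε) 1 a b := by
  by_cases h : a = b
  · subst h; rw [uAlpha_dd'_diag hε]
  by_cases hs : ((a:ℕ) < 4 ↔ (b:ℕ) < 4)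
  · rw [uAlpha_dd'_same hε h hs]; norm_num
  · rw [uAlpha_dd'_cross hε hs]; linarith

lemma uAlpha_dd'_le {ε : ℝ} (hε : 0 < ε) (a b : Fin 8) : uAlpha (dd' ε) 1 a b ≤ 2 + ε := by
  by_cases h : a = b
  · subst h; rw [uAlpha_dd'_diag hε]; linarith
  by_cases hs : ((a:ℕ) < 4 ↔ (b:ℕ) < 4)
  · rw [uAlpha_dd'_same hε h hs]; linarith
  · rw [uAlpha_dd'_cross hε hs]

lemma ghDist_u {ε : ℝ} (hε : 0 < ε) :
    ghDist (uAlpha dd 1) (uAlpha (dd' ε) 1) = (1 + ε) / 2 := by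
  have h := ghDist_eval (uAlpha dd 1) (uAlpha (dd' ε) 1) (1 + ε) (4 + ε) ?_ ?_ ?_ ?_
  · rw [h]; ring
  · intro a a'
    by_cases hd : a = a'
    · subst hd
      rw [uAlpha_dd_diag, uAlpha_dd'_diag hε]
      simp
      linarith
    by_cases hs : ((a:ℕ) < 4 ↔ (a':ℕ) < 4)
    · rw [uAlpha_dd_off hd, uAlpha_dd'_same hε hd hs]
      simp
      linarith
    · rw [uAlpha_dd_off hd, uAlpha_dd'_cross hε hs]
      rw [show (1:ℝ) - (2 + ε) = -(1 + ε) by ring, abs_neg, abs_of_nonneg (by linarith)]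
  · refine ⟨0, 4, ?_⟩
    have hs : ¬ (((0 : Fin 8):ℕ) < 4 ↔ ((4 : Fin 8):ℕ) < 4) := by decide
    rw [uAlpha_dd_off (by decide), uAlpha_dd'_cross hε hs]
    rw [show (1:ℝ) - (2 + ε) = -(1 + ε) by ring, abs_neg, abs_of_nonneg (by linarith)]
  · intro R hR
    obtain ⟨a, ha⟩ := hR.2 0
    obtain ⟨a', ha'⟩ := hR.2 4
    refine ⟨(a, 0), ha, (a', 4), ha', ?_⟩
    have hs : ¬ (((0 : Fin 8):ℕ) < 4 ↔ ((4 : Fin 8):ℕ) < 4) := by decide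
    have h04 : uAlpha (dd' ε) 1 0 4 = 2 + ε := uAlpha_dd'_cross hε hs
    simp only [h04]
    have h3 : uAlpha dd 1 a a' ≤ 1 := uAlpha_dd_le1 a a'
    rw [abs_sub_comm]
    calc 1 + ε ≤ (2 + ε) - uAlpha dd 1 a a' := by linarith
      _ ≤ |(2 + ε) - uAlpha dd 1 a a'| := le_abs_self _
  · intro a a' b b'
    have h1 := uAlpha_dd_nonneg a a'
    have h2 := uAlpha_dd_le1 a a'
    have h3 := uAlpha_dd'_nonneg hε b b'
    have h4 := uAlpha_dd'_le hε b b'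
    rw [abs_le]
    constructor <;> linarith

end SLnot

theorem SLone_not_GH_stable (ε : ℝ) (hε : 0 < ε) :
    ∃ (X : Type) (iX : Fintype X) (d d' : X → X → ℝ),
      @Fintype.card X iX = 8 ∧ IsMetric d ∧ IsMetric d' ∧
      ghDist d d' = ε / 2 ∧
      ghDist (@uAlpha X iX d 1) (@uAlpha X iX d' 1) = (1 + ε) / 2 :=
  ⟨Fin 8, inferInstance, SLnot.dd, SLnot.dd' ε, by simp, SLnot.dd_metric,
    SLnot.dd'_metric hε, SLnot.ghDist_dd hε, SLnot.ghDist_u hε⟩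
end

section
/- The outputs of SL(α) for different parameters are in general incomparable: there exist finite metric spaces (X,d) and parameters α > α' > 0 such that neither u_α(x,y) ≤ u_{α'}(x,y) for all x,y ∈ X, nor u_{α'}(x,y) ≤ u_α(x,y) for all x,y ∈ X. Likewise, there exist finite metric spaces (X,d) and parameters α > α' > 0 such that neither u*_α ≤ u*_{α'} pointwise nor u*_{α'} ≤ u*_α pointwise. -/
open Relation

namespace SLproof

def D0 (i j : ℕ) : ℕ :=
  if i = j then 0
  else if i / 3 = j / 3 then 1
  else if (i = 0 ∧ j = 3) ∨ (i = 3 ∧ j = 0) ∨ (i = 6 ∧ j = 9) ∨ (i = 9 ∧ j = 6) then 2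
  else if (i / 3 = 0 ∧ j / 3 = 1) ∨ (i / 3 = 1 ∧ j / 3 = 0) ∨
          (i / 3 = 2 ∧ j / 3 = 3) ∨ (i / 3 = 3 ∧ j / 3 = 2) then 3
  else if (i = 0 ∧ (j = 6 ∨ j = 7)) ∨ ((i = 6 ∨ i = 7) ∧ j = 0) then 3
  else 4

noncomputable def dd : Fin 12 → Fin 12 → ℝ := fun i j => ((D0 i.val j.val : ℕ) : ℝ)

lemma dd_cast_le (i j : Fin 12) (n : ℕ) : dd i j ≤ (n : ℝ) ↔ D0 i.val j.val ≤ n := by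
  simp [dd]

lemma dd_metric : IsMetric dd := by
  refine ⟨fun x y => by simp [dd], fun x y => ?_, fun x y => ?_, fun x y z => ?_⟩
  · rw [show ((0:ℝ) = ((0:ℕ):ℝ)) by norm_num, dd, Nat.cast_inj]
    constructor
    · intro h
      have : ∀ a b : Fin 12, D0 a.val b.val = 0 → a = b := by decide
      exact this x y h
    · rintro rfl; simp [D0]
  · have : ∀ a b : Fin 12, D0 a.val b.val = D0 b.val a.val := by decide
    simp [dd, this x y]
  · have : ∀ a b c : Fin 12, D0 a.val c.val ≤ D0 a.val b.val + D0 b.val c.val := by decide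
    calc dd x z = ((D0 x.val z.val : ℕ) : ℝ) := rfl
    _ ≤ ((D0 x.val y.val + D0 y.val z.val : ℕ) : ℝ) := by exact_mod_cast this x y z
    _ = dd x y + dd y z := by push_cast; rfl


lemma dimF_coe {t : ℝ} (F : Finset (Fin 12)) (h0 : F.Nonempty)
    (hc : ∀ x ∈ F, ∀ y ∈ F, dd x y ≤ t) :
    dimF dd t (↑F) = (F.card : ℝ) - 1 := by
  have hub : ∀ v ∈ { v : ℝ | ∃ S : Finset (Fin 12), ↑S ⊆ (↑F : Set (Fin 12)) ∧
      (∀ s ∈ S, ∀ s' ∈ S, dd s s' ≤ t) ∧ v = (S.card : ℝ) - 1 },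
      v ≤ (F.card : ℝ) - 1 := by
    rintro v ⟨S, hS, -, rfl⟩
    have : S ⊆ F := Finset.coe_subset.mp hS
    have := Finset.card_le_card this
    have : (S.card : ℝ) ≤ (F.card : ℝ) := by exact_mod_cast this
    linarith
  have hmem : (F.card : ℝ) - 1 ∈ { v : ℝ | ∃ S : Finset (Fin 12), ↑S ⊆ (↑F : Set (Fin 12)) ∧
      (∀ s ∈ S, ∀ s' ∈ S, dd s s' ≤ t) ∧ v = (S.card : ℝ) - 1 } :=
    ⟨F, subset_rfl, hc, rfl⟩
  exact le_antisymm (csSup_le ⟨_, hmem⟩ hub) (le_csSup ⟨_, hub⟩ hmem)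

lemma dimF_single {t : ℝ} (ht : 0 ≤ t) (x : Fin 12) :
    dimF dd t ({x} : Set (Fin 12)) = 0 := by
  have : ({x} : Set (Fin 12)) = (↑({x} : Finset (Fin 12)) : Set (Fin 12)) := by simp
  rw [this, dimF_coe _ ⟨x, by simp⟩ ?_]
  · simp
  · intro a ha b hb
    simp at ha hb
    subst ha; subst hb
    simpa [dd, D0] using ht

def FP : Finset (Fin 12) := {0,1,2}
def FQ : Finset (Fin 12) := {3,4,5}
def FR : Finset (Fin 12) := {6,7,8}
def FS : Finset (Fin 12) := {9,10,11}
def FPQ : Finset (Fin 12) := {0,1,2,3,4,5}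
def FRS : Finset (Fin 12) := {6,7,8,9,10,11}

def P0 : Set (Set (Fin 12)) := singletons (Fin 12)
def P1 : Set (Set (Fin 12)) := {↑FP, ↑FQ, ↑FR, ↑FS}
def P2 : Set (Set (Fin 12)) := {↑FPQ, ↑FRS}
def P3 : Set (Set (Fin 12)) := {Set.univ}

lemma dimF_of_card {t : ℝ} {F : Finset (Fin 12)} {m : ℕ} (hcard : F.card = m) (h0 : 0 < m)
    (hn : ℕ) (ht : t = (hn:ℝ)) (hc : ∀ x ∈ F, ∀ y ∈ F, D0 x.val y.val ≤ hn) :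
    dimF dd t (↑F) = (m : ℝ) - 1 := by
  subst ht
  rw [dimF_coe F (Finset.card_pos.mp (hcard ▸ h0)) (fun x hx y hy => (dd_cast_le x y hn).mpr (hc x hx y hy)), hcard]
section General
variable {X : Type} {d : X → X → ℝ} {α t : ℝ} {P : Set (Set X)}

lemma sameComp_key (comp : Set X → Set (Set X))
    (hmem : ∀ B ∈ P, B ∈ comp B)
    (hsub : ∀ B ∈ P, comp B ⊆ P)
    (hcoh : ∀ B ∈ P, ∀ B' ∈ comp B, comp B' = comp B)
    (hedge : ∀ C C', IsEdge d α t P C C' → C' ∈ comp C)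
    (hconn : ∀ B ∈ P, ∀ B' ∈ comp B, SameComp d α t P B B')
    {B : Set X} (hB : B ∈ P) :
    { B' | B' ∈ P ∧ SameComp d α t P B B' } = comp B := by
  ext B'
  constructor
  · rintro ⟨-, hsc⟩
    induction hsc with
    | refl => exact hmem B hB
    | tail _ he ih => exact (hcoh B hB _ ih) ▸ hedge _ _ he
  · intro h
    exact ⟨hsub B hB h, hconn B hB B' h⟩

lemma mergeStep_eq_of_comp (comp : Set X → Set (Set X)) (Q : Set (Set X))
    (hmem : ∀ B ∈ P, B ∈ comp B)
    (hsub : ∀ B ∈ P, comp B ⊆ P)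
    (hcoh : ∀ B ∈ P, ∀ B' ∈ comp B, comp B' = comp B)
    (hedge : ∀ C C', IsEdge d α t P C C' → C' ∈ comp C)
    (hconn : ∀ B ∈ P, ∀ B' ∈ comp B, SameComp d α t P B B')
    (hQ : Q = {C | ∃ B ∈ P, C = ⋃₀ comp B}) :
    mergeStep d α t P = Q := by
  rw [hQ]
  unfold mergeStep
  ext C
  constructor
  · rintro ⟨B, hB, rfl⟩
    exact ⟨B, hB, by rw [sameComp_key comp hmem hsub hcoh hedge hconn hB]⟩
  · rintro ⟨B, hB, rfl⟩
    exact ⟨B, hB, by rw [sameComp_key comp hmem hsub hcoh hedge hconn hB]⟩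

lemma mergeStep_eq_self (h : ∀ C C', ¬ IsEdge d α t P C C') :
    mergeStep d α t P = P := by
  apply mergeStep_eq_of_comp (fun B => {B}) P
  · intro B _; rfl
  · intro B hB C hC; rwa [Set.mem_singleton_iff.mp hC]
  · intro B _ B' hB'; rw [Set.mem_singleton_iff.mp hB']
  · intro C C' he; exact absurd he (h C C')
  · intro B _ B' hB'; rw [Set.mem_singleton_iff.mp hB']; exact Relation.ReflTransGen.refl
  · ext C; simp

lemma isEdge_symm (hd : ∀ x y, d x y = d y x) {B B' : Set X}
    (h : IsEdge d α t P B B') : IsEdge d α t P B' B := by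
  obtain ⟨h1, h2, h3, ⟨x, hx, y, hy, hxy⟩, S, hS, hSB, hSB', hpw, hmin⟩ := h
  exact ⟨h2, h1, h3.symm, ⟨y, hy, x, hx, (hd y x) ▸ hxy⟩,
    S, Set.union_comm (B:Set X) B' ▸ hS, hSB', hSB, hpw, by rwa [min_comm]⟩

lemma sameComp_symm (hd : ∀ x y, d x y = d y x) {B B' : Set X}
    (h : SameComp d α t P B B') : SameComp d α t P B' B :=
  by haveI : Std.Symm (IsEdge d α t P) := ⟨fun _ _ he => isEdge_symm hd he⟩; exact Std.Symm.symm (r := ReflTransGen (IsEdge d α t P)) _ _ h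

lemma mergeStepStar_eq_mergeStep (hd : ∀ x y, d x y = d y x) (n : ℕ)
    (hα : 1 ≤ α) (hsize : ∀ B ∈ P, B.ncard = n) :
    mergeStepStar d α t P = mergeStep d α t P := by
  have big : ∀ B ∈ P, IsBig d α t P B := by
    intro B hB
    refine ⟨hB, fun B' hB' _ => ?_⟩
    rw [hsize B hB, hsize B' hB']
    nlinarith [Nat.cast_nonneg (α := ℝ) n]
  have star_iff : ∀ B B', StarRel d α t P B B' ↔
      (B ∈ P ∧ B' ∈ P ∧ SameComp d α t P B B') := by
    intro B B'
    constructor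
    · rintro ⟨h1, h2, h3, -⟩; exact ⟨h1, h2, h3⟩
    · rintro ⟨h1, h2, h3⟩
      refine ⟨h1, h2, h3, Or.inl ⟨big B h1, big B' h2, ?_⟩⟩
      exact Relation.ReflTransGen.mono
        (p := fun C C' => IsEdge d α t P C C' ∧ IsBig d α t P C ∧ IsBig d α t P C')
        (fun C C' he => ⟨he, big C he.1, big C' he.2.1⟩) _ _ h3
  have eqv : ∀ B B', EqvGen (StarRel d α t P) B B' → B = B' ∨ StarRel d α t P B B' := by
    intro B B' h
    induction h with
    | rel _ _ h => exact Or.inr h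
    | refl _ => exact Or.inl rfl
    | symm a b _ ih =>
        rcases ih with rfl | h
        · exact Or.inl rfl
        · obtain ⟨h1, h2, h3⟩ := (star_iff a b).mp h
          exact Or.inr ((star_iff b a).mpr ⟨h2, h1, sameComp_symm hd h3⟩)
    | trans a b c _ _ ih1 ih2 =>
        rcases ih1 with rfl | h1
        · exact ih2
        · rcases ih2 with rfl | h2
          · exact Or.inr h1
          · obtain ⟨ha, hb, hab⟩ := (star_iff a b).mp h1
            obtain ⟨-, hc, hbc⟩ := (star_iff b c).mp h2
            exact Or.inr ((star_iff a c).mpr ⟨ha, hc, hab.trans hbc⟩)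
  unfold mergeStepStar mergeStep
  ext C
  have key : ∀ B ∈ P, { B' | B' ∈ P ∧ EqvGen (StarRel d α t P) B B' } =
      { B' | B' ∈ P ∧ SameComp d α t P B B' } := by
    intro B hB
    ext B'
    constructor
    · rintro ⟨hB', he⟩
      rcases eqv _ _ he with rfl | h
      · exact ⟨hB', Relation.ReflTransGen.refl⟩
      · exact ⟨hB', ((star_iff B B').mp h).2.2⟩
    · rintro ⟨hB', hsc⟩
      exact ⟨hB', EqvGen.rel _ _ ((star_iff B B').mpr ⟨hB, hB', hsc⟩)⟩
  constructor
  · rintro ⟨B, hB, rfl⟩; exact ⟨B, hB, by rw [key B hB]⟩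
  · rintro ⟨B, hB, rfl⟩; exact ⟨B, hB, by rw [key B hB]⟩

end General
section Steps
variable {α t : ℝ} {P : Set (Set (Fin 12))}

lemma isEdge_mk {A B : Finset (Fin 12)} (hA : (↑A : Set (Fin 12)) ∈ P)
    (hB : (↑B : Set (Fin 12)) ∈ P) (hne : A ≠ B)
    (n : ℕ) (ht : t = (n : ℝ))
    (x y : Fin 12) (hx : x ∈ A) (hy : y ∈ B) (hxy : D0 x.val y.val ≤ n)
    (S : Finset (Fin 12)) (hS : S ⊆ A ∪ B)
    (s1 : Fin 12) (hs1 : s1 ∈ S) (hs1A : s1 ∈ A)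
    (s2 : Fin 12) (hs2 : s2 ∈ S) (hs2B : s2 ∈ B)
    (hpw : ∀ s ∈ S, ∀ s' ∈ S, D0 s.val s'.val ≤ n)
    (hmin : min (dimF dd t ↑A) (dimF dd t ↑B) ≤ α * ((S.card : ℝ) - 1)) :
    IsEdge dd α t P (↑A) (↑B) := by
  subst ht
  refine ⟨hA, hB, by simpa [Finset.coe_inj] using hne,
    ⟨x, hx, y, hy, (dd_cast_le x y n).mpr hxy⟩,
    S, ?_, ⟨s1, hs1, hs1A⟩, ⟨s2, hs2, hs2B⟩,
    fun s hs s' hs' => (dd_cast_le s s' n).mpr (hpw s hs s' hs'), hmin⟩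
  rw [← Finset.coe_union]
  exact Finset.coe_subset.mpr hS

lemma not_isEdge_far {A B : Set (Fin 12)} (FA FB : Finset (Fin 12))
    (hA : A = ↑FA) (hB : B = ↑FB) (n : ℕ) (ht : t = (n : ℝ))
    (h : ∀ x ∈ FA, ∀ y ∈ FB, ¬ D0 x.val y.val ≤ n) :
    ¬ IsEdge dd α t P A B := by
  subst ht hA hB
  rintro ⟨-, -, -, ⟨x, hx, y, hy, hxy⟩, -⟩
  exact h x hx y hy ((dd_cast_le x y n).mp hxy)

lemma step_zero (hP : P = P0) : mergeStep dd α 0 P = P0 := by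
  subst hP
  apply mergeStep_eq_self
  rintro C C' ⟨⟨x, rfl⟩, ⟨y, rfl⟩, hne, ⟨a, ha, b, hb, hab⟩, -⟩
  rw [Set.mem_singleton_iff] at ha hb
  subst ha hb
  rw [show ((0:ℝ) = ((0:ℕ):ℝ)) by norm_num, dd_cast_le] at hab
  have : ∀ a b : Fin 12, D0 a.val b.val ≤ 0 → a = b := by decide
  exact hne (by rw [this a b hab])


end Steps
/-- component map at scale 1 on singleton blocks -/
def comp2 (B : Set (Fin 12)) : Set (Set (Fin 12)) :=
  { C | ∃ a b : Fin 12, B = {a} ∧ C = {b} ∧ D0 a.val b.val ≤ 1 }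

lemma mem_P0 {B : Set (Fin 12)} (h : B ∈ P0) : ∃ x : Fin 12, B = {x} := h

lemma comp2_coh : ∀ x a : Fin 12, ({a} : Set (Fin 12)) ∈ comp2 {x} →
    comp2 {a} = comp2 {x} := by
  intro x a ⟨x', a', hx', ha', h1⟩
  rw [Set.singleton_eq_singleton_iff] at hx' ha'
  subst hx'; subst ha'
  have key' : ∀ u v : Fin 12, D0 u.val v.val ≤ 1 → ∀ b : Fin 12,
      (D0 v.val b.val ≤ 1 ↔ D0 u.val b.val ≤ 1) := by decide
  have key := key' x a h1
  ext C
  constructor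
  · rintro ⟨a2, c, ha2, rfl, h2⟩
    rw [Set.singleton_eq_singleton_iff] at ha2; subst ha2
    exact ⟨x, c, rfl, rfl, (key c).mp h2⟩
  · rintro ⟨x2, c, hx2, rfl, h2⟩
    rw [Set.singleton_eq_singleton_iff] at hx2; subst hx2
    exact ⟨a, c, rfl, rfl, (key c).mpr h2⟩

lemma singleton_edge {α : ℝ} (hα : 1 ≤ α) {a b : Fin 12} (hne : a ≠ b)
    (hab : D0 a.val b.val ≤ 1) : IsEdge dd α 1 P0 {a} {b} := by
  have hα0 : (0:ℝ) < α := lt_of_lt_of_le one_pos hα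
  refine ⟨⟨a, rfl⟩, ⟨b, rfl⟩, by simp [hne], ⟨a, rfl, b, rfl, ?_⟩,
      {a, b}, ?_, ⟨a, by simp, rfl⟩, ⟨b, by simp, rfl⟩, ?_, ?_⟩
  · rw [show ((1:ℝ) = ((1:ℕ):ℝ)) by norm_num]
    exact (dd_cast_le a b 1).mpr hab
  · intro z hz
    rcases Finset.mem_insert.mp hz with rfl | hz
    · exact Set.mem_union_left _ rfl
    · exact Set.mem_union_right _ (Finset.mem_singleton.mp hz)
  · intro s hs s' hs'
    rw [show ((1:ℝ) = ((1:ℕ):ℝ)) by norm_num, dd_cast_le]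
    have hsymm : ∀ u v : Fin 12, D0 u.val v.val ≤ 1 → D0 v.val u.val ≤ 1 := by decide
    have hzz : ∀ z : Fin 12, D0 z.val z.val ≤ 1 := by decide
    simp only [Finset.mem_insert, Finset.mem_singleton] at hs hs'
    rcases hs with rfl | rfl <;> rcases hs' with rfl | rfl <;>
      first | exact hzz _ | exact hab | exact hsymm _ _ hab
  · rw [dimF_single (by norm_num) a, dimF_single (by norm_num) b,
      Finset.card_insert_of_notMem (by simpa using hne), Finset.card_singleton]
    simpa using hα0.le

lemma sUnion_comp2 (x : Fin 12) :
    ⋃₀ comp2 {x} = {z : Fin 12 | D0 x.val z.val ≤ 1} := by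
  ext z
  simp only [Set.mem_sUnion, comp2, Set.mem_setOf_eq]
  constructor
  · rintro ⟨C, ⟨a, b, ha, rfl, hab⟩, hz⟩
    rw [Set.singleton_eq_singleton_iff] at ha
    rw [Set.mem_singleton_iff] at hz
    subst ha; subst hz
    exact hab
  · intro h
    exact ⟨{z}, ⟨x, z, rfl, rfl, h⟩, rfl⟩

lemma ball_eq (x : Fin 12) (F0 : Finset (Fin 12))
    (hiff : ∀ z : Fin 12, D0 x.val z.val ≤ 1 ↔ z ∈ F0) :
    {z : Fin 12 | D0 x.val z.val ≤ 1} = (↑F0 : Set (Fin 12)) := by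
  ext z; simpa using hiff z

lemma step_one {α : ℝ} (hα : 1 ≤ α) : mergeStep dd α 1 P0 = P1 := by
  apply mergeStep_eq_of_comp comp2 P1
  · rintro B ⟨x, rfl⟩
    refine ⟨x, x, rfl, rfl, ?_⟩
    revert x; decide
  · rintro B ⟨x, rfl⟩ C ⟨a, b, ha, rfl, -⟩
    exact ⟨b, rfl⟩
  · rintro B ⟨x, rfl⟩ B' ⟨a, b, ha, rfl, hab⟩
    rw [Set.singleton_eq_singleton_iff] at ha; subst ha
    exact comp2_coh x b ⟨x, b, rfl, rfl, hab⟩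
  · rintro C C' ⟨hC, hC', hne, ⟨u, hu, v, hv, huv⟩, -⟩
    obtain ⟨a, rfl⟩ := mem_P0 hC
    obtain ⟨b, rfl⟩ := mem_P0 hC'
    rw [Set.mem_singleton_iff] at hu hv
    subst hu; subst hv
    rw [show ((1:ℝ) = ((1:ℕ):ℝ)) by norm_num, dd_cast_le] at huv
    exact ⟨u, v, rfl, rfl, huv⟩
  · rintro B ⟨x, rfl⟩ B' ⟨a, b, ha, rfl, hab⟩
    rw [Set.singleton_eq_singleton_iff] at ha; subst ha
    by_cases hxb : x = b
    · subst hxb; exact Relation.ReflTransGen.refl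
    · exact Relation.ReflTransGen.single (singleton_edge hα hxb hab)
  · ext C
    simp only [Set.mem_setOf_eq]
    constructor
    · intro hC
      rcases hC with rfl | rfl | rfl | rfl
      · exact ⟨{0}, ⟨0, rfl⟩, by rw [sUnion_comp2 0, ball_eq 0 FP (by decide)]⟩
      · exact ⟨{3}, ⟨3, rfl⟩, by rw [sUnion_comp2 3, ball_eq 3 FQ (by decide)]⟩
      · exact ⟨{6}, ⟨6, rfl⟩, by rw [sUnion_comp2 6, ball_eq 6 FR (by decide)]⟩
      · exact ⟨{9}, ⟨9, rfl⟩, by rw [sUnion_comp2 9, ball_eq 9 FS (by decide)]⟩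
    · rintro ⟨B, hB, rfl⟩
      obtain ⟨x, rfl⟩ := mem_P0 hB
      clear hB
      rw [sUnion_comp2 x]
      have hcase : x ∈ FP ∨ x ∈ FQ ∨ x ∈ FR ∨ x ∈ FS := by revert x; decide
      rcases hcase with h | h | h | h
      · rw [ball_eq x FP (by revert h; revert x; decide)]; exact Or.inl rfl
      · rw [ball_eq x FQ (by revert h; revert x; decide)]; exact Or.inr (Or.inl rfl)
      · rw [ball_eq x FR (by revert h; revert x; decide)]; exact Or.inr (Or.inr (Or.inl rfl))
      · rw [ball_eq x FS (by revert h; revert x; decide)]; exact Or.inr (Or.inr (Or.inr rfl))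
lemma coe_ne {A B : Finset (Fin 12)} (h : A ≠ B) : (↑A : Set (Fin 12)) ≠ ↑B := by
  simpa [Finset.coe_inj] using h

lemma dim_FP_2 : dimF dd 2 (↑FP) = 2 := by
  rw [dimF_of_card (F := FP) (m := 3) (by decide) (by norm_num) 2 (by norm_num) (by decide)]; norm_num
lemma dim_FQ_2 : dimF dd 2 (↑FQ) = 2 := by
  rw [dimF_of_card (F := FQ) (m := 3) (by decide) (by norm_num) 2 (by norm_num) (by decide)]; norm_num
lemma dim_FR_2 : dimF dd 2 (↑FR) = 2 := by
  rw [dimF_of_card (F := FR) (m := 3) (by decide) (by norm_num) 2 (by norm_num) (by decide)]; norm_num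
lemma dim_FS_2 : dimF dd 2 (↑FS) = 2 := by
  rw [dimF_of_card (F := FS) (m := 3) (by decide) (by norm_num) 2 (by norm_num) (by decide)]; norm_num
lemma dim_FP_3 : dimF dd 3 (↑FP) = 2 := by
  rw [dimF_of_card (F := FP) (m := 3) (by decide) (by norm_num) 3 (by norm_num) (by decide)]; norm_num
lemma dim_FQ_3 : dimF dd 3 (↑FQ) = 2 := by
  rw [dimF_of_card (F := FQ) (m := 3) (by decide) (by norm_num) 3 (by norm_num) (by decide)]; norm_num
lemma dim_FR_3 : dimF dd 3 (↑FR) = 2 := by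
  rw [dimF_of_card (F := FR) (m := 3) (by decide) (by norm_num) 3 (by norm_num) (by decide)]; norm_num
lemma dim_FS_3 : dimF dd 3 (↑FS) = 2 := by
  rw [dimF_of_card (F := FS) (m := 3) (by decide) (by norm_num) 3 (by norm_num) (by decide)]; norm_num
lemma dim_FPQ_3 : dimF dd 3 (↑FPQ) = 5 := by
  rw [dimF_of_card (F := FPQ) (m := 6) (by decide) (by norm_num) 3 (by norm_num) (by decide)]; norm_num
lemma dim_FRS_3 : dimF dd 3 (↑FRS) = 5 := by
  rw [dimF_of_card (F := FRS) (m := 6) (by decide) (by norm_num) 3 (by norm_num) (by decide)]; norm_num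
lemma dim_FPQ_4 : dimF dd 4 (↑FPQ) = 5 := by
  rw [dimF_of_card (F := FPQ) (m := 6) (by decide) (by norm_num) 4 (by norm_num) (by decide)]; norm_num
lemma dim_FRS_4 : dimF dd 4 (↑FRS) = 5 := by
  rw [dimF_of_card (F := FRS) (m := 6) (by decide) (by norm_num) 4 (by norm_num) (by decide)]; norm_num

section Steps2
variable {α t : ℝ} {P : Set (Set (Fin 12))}

lemma not_isEdge_clique {A B : Finset (Fin 12)} (n : ℕ) (ht : t = (n : ℝ)) (hα : 0 ≤ α)
    (W : Finset (Fin 12))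
    (hkey : ∀ p q s : Fin 12, p ∈ A → q ∈ B → s ∈ A ∪ B → D0 p.val q.val ≤ n →
      D0 s.val p.val ≤ n → D0 s.val q.val ≤ n → s ∈ W)
    (hnum : α * ((W.card : ℝ) - 1) < min (dimF dd t ↑A) (dimF dd t ↑B)) :
    ¬ IsEdge dd α t P (↑A) (↑B) := by
  subst ht
  rintro ⟨-, -, -, -, S, hS, ⟨b, hbS, hbA⟩, ⟨c, hcS, hcB⟩, hpw, hmin⟩
  have hS' : S ⊆ A ∪ B := by
    rw [← Finset.coe_subset, Finset.coe_union]
    exact hS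
  have hbA' : b ∈ A := hbA
  have hcB' : c ∈ B := hcB
  have hSW : S ⊆ W := by
    intro s hs
    exact hkey b c s hbA' hcB' (hS' hs)
      ((dd_cast_le b c n).mp (hpw b hbS c hcS))
      ((dd_cast_le s b n).mp (hpw s hs b hbS))
      ((dd_cast_le s c n).mp (hpw s hs c hcS))
  have hcard : (S.card : ℝ) ≤ (W.card : ℝ) := by exact_mod_cast Finset.card_le_card hSW
  have : α * ((S.card : ℝ) - 1) ≤ α * ((W.card : ℝ) - 1) := by nlinarith
  linarith

open Classical in
noncomputable def comp3 (B : Set (Fin 12)) : Set (Set (Fin 12)) :=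
  if B = ↑FP ∨ B = ↑FQ then {↑FP, ↑FQ} else {↑FR, ↑FS}

lemma comp3_FP : comp3 ↑FP = {↑FP, ↑FQ} := if_pos (Or.inl rfl)
lemma comp3_FQ : comp3 ↑FQ = {↑FP, ↑FQ} := if_pos (Or.inr rfl)
lemma comp3_FR : comp3 ↑FR = {↑FR, ↑FS} := by
  apply if_neg
  rintro (h | h) <;> exact coe_ne (by decide) h
lemma comp3_FS : comp3 ↑FS = {↑FR, ↑FS} := by
  apply if_neg
  rintro (h | h) <;> exact coe_ne (by decide) h

lemma mem_P1 {B : Set (Fin 12)} (h : B ∈ P1) :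
    B = ↑FP ∨ B = ↑FQ ∨ B = ↑FR ∨ B = ↑FS := h

lemma edge_PQ_2 : IsEdge dd 2 2 P1 (↑FP) (↑FQ) := by
  apply isEdge_mk (Or.inl rfl) (Or.inr (Or.inl rfl)) (by decide) 2 (by norm_num)
    0 3 (by decide) (by decide) (by decide) ({0,3}) (by decide)
    0 (by decide) (by decide) 3 (by decide) (by decide) (by decide)
  rw [dim_FP_2, dim_FQ_2, show (({0,3} : Finset (Fin 12)).card) = 2 from by decide]
  norm_num
lemma edge_RS_2 : IsEdge dd 2 2 P1 (↑FR) (↑FS) := by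
  apply isEdge_mk (Or.inr (Or.inr (Or.inl rfl))) (Or.inr (Or.inr (Or.inr rfl)))
    (by decide) 2 (by norm_num)
    6 9 (by decide) (by decide) (by decide) ({6,9}) (by decide)
    6 (by decide) (by decide) 9 (by decide) (by decide) (by decide)
  rw [dim_FR_2, dim_FS_2, show (({6,9} : Finset (Fin 12)).card) = 2 from by decide]
  norm_num

lemma step2_2 : mergeStep dd 2 2 P1 = P2 := by
  apply mergeStep_eq_of_comp comp3 P2
  · intro B hB
    rcases mem_P1 hB with rfl | rfl | rfl | rfl
    · rw [comp3_FP]; exact Or.inl rfl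
    · rw [comp3_FQ]; exact Or.inr rfl
    · rw [comp3_FR]; exact Or.inl rfl
    · rw [comp3_FS]; exact Or.inr rfl
  · intro B hB C hC
    rcases mem_P1 hB with rfl | rfl | rfl | rfl <;>
      [rw [comp3_FP] at hC; rw [comp3_FQ] at hC; rw [comp3_FR] at hC; rw [comp3_FS] at hC] <;>
      rcases hC with rfl | rfl <;> simp [P1]
  · intro B hB B' hB'
    rcases mem_P1 hB with rfl | rfl | rfl | rfl <;>
      [rw [comp3_FP] at hB' ⊢; rw [comp3_FQ] at hB' ⊢; rw [comp3_FR] at hB' ⊢;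
       rw [comp3_FS] at hB' ⊢] <;>
      rcases hB' with rfl | rfl <;>
      simp [comp3_FP, comp3_FQ, comp3_FR, comp3_FS]
  · intro C C' he
    have hC := he.1
    have hC' := he.2.1
    rcases mem_P1 hC with rfl | rfl | rfl | rfl <;>
      rcases mem_P1 hC' with rfl | rfl | rfl | rfl <;>
      simp only [comp3_FP, comp3_FQ, comp3_FR, comp3_FS]
    · exact Or.inl rfl
    · exact Or.inr rfl
    · exact absurd he (not_isEdge_far FP FR rfl rfl 2 (by norm_num) (by decide))
    · exact absurd he (not_isEdge_far FP FS rfl rfl 2 (by norm_num) (by decide))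
    · exact Or.inl rfl
    · exact Or.inr rfl
    · exact absurd he (not_isEdge_far FQ FR rfl rfl 2 (by norm_num) (by decide))
    · exact absurd he (not_isEdge_far FQ FS rfl rfl 2 (by norm_num) (by decide))
    · exact absurd he (not_isEdge_far FR FP rfl rfl 2 (by norm_num) (by decide))
    · exact absurd he (not_isEdge_far FR FQ rfl rfl 2 (by norm_num) (by decide))
    · exact Or.inl rfl
    · exact Or.inr rfl
    · exact absurd he (not_isEdge_far FS FP rfl rfl 2 (by norm_num) (by decide))
    · exact absurd he (not_isEdge_far FS FQ rfl rfl 2 (by norm_num) (by decide))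
    · exact Or.inl rfl
    · exact Or.inr rfl
  · have hsymm := dd_metric.2.2.1
    intro B hB B' hB'
    rcases mem_P1 hB with rfl | rfl | rfl | rfl <;>
      [rw [comp3_FP] at hB'; rw [comp3_FQ] at hB'; rw [comp3_FR] at hB'; rw [comp3_FS] at hB'] <;>
      rcases hB' with rfl | rfl
    · exact Relation.ReflTransGen.refl
    · exact Relation.ReflTransGen.single edge_PQ_2
    · exact Relation.ReflTransGen.single (isEdge_symm hsymm edge_PQ_2)
    · exact Relation.ReflTransGen.refl
    · exact Relation.ReflTransGen.refl
    · exact Relation.ReflTransGen.single edge_RS_2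
    · exact Relation.ReflTransGen.single (isEdge_symm hsymm edge_RS_2)
    · exact Relation.ReflTransGen.refl
  · ext C
    simp only [Set.mem_setOf_eq]
    have hPQ : ⋃₀ ({↑FP, ↑FQ} : Set (Set (Fin 12))) = (↑FPQ : Set (Fin 12)) := by
      rw [Set.sUnion_pair, ← Finset.coe_union]
      congr 1
    have hRS : ⋃₀ ({↑FR, ↑FS} : Set (Set (Fin 12))) = (↑FRS : Set (Fin 12)) := by
      rw [Set.sUnion_pair, ← Finset.coe_union]
      congr 1
    constructor
    · rintro (rfl | rfl)
      · exact ⟨↑FP, Or.inl rfl, by rw [comp3_FP, hPQ]⟩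
      · exact ⟨↑FR, Or.inr (Or.inr (Or.inl rfl)), by rw [comp3_FR, hRS]⟩
    · rintro ⟨B, hB, rfl⟩
      rcases mem_P1 hB with rfl | rfl | rfl | rfl
      · rw [comp3_FP, hPQ]; exact Or.inl rfl
      · rw [comp3_FQ, hPQ]; exact Or.inl rfl
      · rw [comp3_FR, hRS]; exact Or.inr rfl
      · rw [comp3_FS, hRS]; exact Or.inr rfl

end Steps2
section Steps3
variable {α t : ℝ} {P : Set (Set (Fin 12))}

lemma step1_2 : mergeStep dd 1 2 P1 = P1 := by
  apply mergeStep_eq_self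
  intro C C' he
  have hC := he.1
  have hC' := he.2.1
  have hne := he.2.2.1
  rcases mem_P1 hC with rfl | rfl | rfl | rfl <;>
    rcases mem_P1 hC' with rfl | rfl | rfl | rfl
  · exact hne rfl
  · exact (not_isEdge_clique 2 (by norm_num) (by norm_num) {0, 3} (by decide)
      (by rw [dim_FP_2, dim_FQ_2, show (({0,3} : Finset (Fin 12)).card) = 2 from by decide]
          norm_num)) he
  · exact (not_isEdge_far FP FR rfl rfl 2 (by norm_num) (by decide)) he
  · exact (not_isEdge_far FP FS rfl rfl 2 (by norm_num) (by decide)) he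
  · exact (not_isEdge_clique 2 (by norm_num) (by norm_num) {0, 3} (by decide)
      (by rw [dim_FQ_2, dim_FP_2, show (({0,3} : Finset (Fin 12)).card) = 2 from by decide]
          norm_num)) he
  · exact hne rfl
  · exact (not_isEdge_far FQ FR rfl rfl 2 (by norm_num) (by decide)) he
  · exact (not_isEdge_far FQ FS rfl rfl 2 (by norm_num) (by decide)) he
  · exact (not_isEdge_far FR FP rfl rfl 2 (by norm_num) (by decide)) he
  · exact (not_isEdge_far FR FQ rfl rfl 2 (by norm_num) (by decide)) he
  · exact hne rfl
  · exact (not_isEdge_clique 2 (by norm_num) (by norm_num) {6, 9} (by decide)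
      (by rw [dim_FR_2, dim_FS_2, show (({6,9} : Finset (Fin 12)).card) = 2 from by decide]
          norm_num)) he
  · exact (not_isEdge_far FS FP rfl rfl 2 (by norm_num) (by decide)) he
  · exact (not_isEdge_far FS FQ rfl rfl 2 (by norm_num) (by decide)) he
  · exact (not_isEdge_clique 2 (by norm_num) (by norm_num) {6, 9} (by decide)
      (by rw [dim_FS_2, dim_FR_2, show (({6,9} : Finset (Fin 12)).card) = 2 from by decide]
          norm_num)) he
  · exact hne rfl

lemma mem_P2 {B : Set (Fin 12)} (h : B ∈ P2) : B = ↑FPQ ∨ B = ↑FRS := h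

lemma step2_3 : mergeStep dd 2 3 P2 = P2 := by
  apply mergeStep_eq_self
  intro C C' he
  have hC := he.1
  have hC' := he.2.1
  have hne := he.2.2.1
  rcases mem_P2 hC with rfl | rfl <;> rcases mem_P2 hC' with rfl | rfl
  · exact hne rfl
  · exact (not_isEdge_clique 3 (by norm_num) (by norm_num) {0, 6, 7} (by decide)
      (by rw [dim_FPQ_3, dim_FRS_3,
              show (({0,6,7} : Finset (Fin 12)).card) = 3 from by decide]
          norm_num)) he
  · exact (not_isEdge_clique 3 (by norm_num) (by norm_num) {0, 6, 7} (by decide)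
      (by rw [dim_FPQ_3, dim_FRS_3,
              show (({0,6,7} : Finset (Fin 12)).card) = 3 from by decide]
          norm_num)) he
  · exact hne rfl

lemma sUnion_P1 : ⋃₀ P1 = (Set.univ : Set (Fin 12)) := by
  have : P1 = {↑FP, ↑FQ, ↑FR, ↑FS} := rfl
  rw [this]
  rw [Set.sUnion_insert, Set.sUnion_insert, Set.sUnion_insert, Set.sUnion_singleton,
    ← Finset.coe_union, ← Finset.coe_union, ← Finset.coe_union]
  rw [show FP ∪ (FQ ∪ (FR ∪ FS)) = Finset.univ from by decide, Finset.coe_univ]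

lemma sUnion_P2 : ⋃₀ P2 = (Set.univ : Set (Fin 12)) := by
  have : P2 = {↑FPQ, ↑FRS} := rfl
  rw [this, Set.sUnion_pair, ← Finset.coe_union]
  rw [show FPQ ∪ FRS = Finset.univ from by decide, Finset.coe_univ]

lemma edge_PQ_3 : IsEdge dd 1 3 P1 (↑FP) (↑FQ) := by
  apply isEdge_mk (Or.inl rfl) (Or.inr (Or.inl rfl)) (by decide) 3 (by norm_num)
    0 3 (by decide) (by decide) (by decide) FPQ (by decide)
    0 (by decide) (by decide) 3 (by decide) (by decide) (by decide)
  rw [dim_FP_3, dim_FQ_3, show FPQ.card = 6 from by decide]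
  norm_num

lemma edge_PR_3 : IsEdge dd 1 3 P1 (↑FP) (↑FR) := by
  apply isEdge_mk (Or.inl rfl) (Or.inr (Or.inr (Or.inl rfl))) (by decide) 3 (by norm_num)
    0 6 (by decide) (by decide) (by decide) ({0, 6, 7}) (by decide)
    0 (by decide) (by decide) 6 (by decide) (by decide) (by decide)
  rw [dim_FP_3, dim_FR_3, show (({0,6,7} : Finset (Fin 12)).card) = 3 from by decide]
  norm_num

lemma edge_RS_3 : IsEdge dd 1 3 P1 (↑FR) (↑FS) := by
  apply isEdge_mk (Or.inr (Or.inr (Or.inl rfl))) (Or.inr (Or.inr (Or.inr rfl)))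
    (by decide) 3 (by norm_num)
    6 9 (by decide) (by decide) (by decide) FRS (by decide)
    6 (by decide) (by decide) 9 (by decide) (by decide) (by decide)
  rw [dim_FR_3, dim_FS_3, show FRS.card = 6 from by decide]
  norm_num

lemma step1_3 : mergeStep dd 1 3 P1 = P3 := by
  have hsymm := dd_metric.2.2.1
  have scFP : ∀ B' ∈ P1, SameComp dd 1 3 P1 (↑FP) B' := by
    intro B' hB'
    rcases mem_P1 hB' with rfl | rfl | rfl | rfl
    · exact Relation.ReflTransGen.refl
    · exact Relation.ReflTransGen.single edge_PQ_3
    · exact Relation.ReflTransGen.single edge_PR_3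
    · exact Relation.ReflTransGen.trans (Relation.ReflTransGen.single edge_PR_3)
        (Relation.ReflTransGen.single edge_RS_3)
  apply mergeStep_eq_of_comp (fun _ => P1) P3
  · exact fun B hB => hB
  · exact fun B _ => le_refl P1
  · exact fun B _ B' _ => rfl
  · exact fun C C' he => he.2.1
  · intro B hB B' hB'
    exact Relation.ReflTransGen.trans (sameComp_symm hsymm (scFP B hB)) (scFP B' hB')
  · ext C
    simp only [Set.mem_setOf_eq]
    constructor
    · rintro rfl
      exact ⟨↑FP, Or.inl rfl, sUnion_P1.symm⟩
    · rintro ⟨B, hB, rfl⟩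
      rw [sUnion_P1]
      rfl

lemma edge_PQRS_4 : IsEdge dd 2 4 P2 (↑FPQ) (↑FRS) := by
  apply isEdge_mk (Or.inl rfl) (Or.inr rfl) (by decide) 4 (by norm_num)
    0 6 (by decide) (by decide) (by decide) Finset.univ (by decide)
    0 (by decide) (by decide) 6 (by decide) (by decide) (by decide)
  rw [dim_FPQ_4, dim_FRS_4, show (Finset.univ : Finset (Fin 12)).card = 12 from by decide]
  norm_num

lemma step2_4 : mergeStep dd 2 4 P2 = P3 := by
  have hsymm := dd_metric.2.2.1
  have scPQ : ∀ B' ∈ P2, SameComp dd 2 4 P2 (↑FPQ) B' := by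
    intro B' hB'
    rcases mem_P2 hB' with rfl | rfl
    · exact Relation.ReflTransGen.refl
    · exact Relation.ReflTransGen.single edge_PQRS_4
  apply mergeStep_eq_of_comp (fun _ => P2) P3
  · exact fun B hB => hB
  · exact fun B _ => le_refl P2
  · exact fun B _ B' _ => rfl
  · exact fun C C' he => he.2.1
  · intro B hB B' hB'
    exact Relation.ReflTransGen.trans (sameComp_symm hsymm (scPQ B hB)) (scPQ B' hB')
  · ext C
    simp only [Set.mem_setOf_eq]
    constructor
    · rintro rfl
      exact ⟨↑FPQ, Or.inl rfl, sUnion_P2.symm⟩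
    · rintro ⟨B, hB, rfl⟩
      rw [sUnion_P2]
      rfl

end Steps3
set_option maxRecDepth 10000 in
lemma image_dd : Finset.image (fun p : Fin 12 × Fin 12 => dd p.1 p.2) Finset.univ
    = ({0,1,2,3,4} : Finset ℝ) := by
  have h1 : (fun p : Fin 12 × Fin 12 => dd p.1 p.2)
      = (fun n : ℕ => (n : ℝ)) ∘ (fun p : Fin 12 × Fin 12 => D0 p.1.val p.2.val) := rfl
  rw [h1, ← Finset.image_image]
  rw [show Finset.image (fun p : Fin 12 × Fin 12 => D0 p.1.val p.2.val) Finset.univ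
      = ({0,1,2,3,4} : Finset ℕ) from by decide]
  simp only [Finset.image_insert, Finset.image_singleton]
  norm_num

lemma filter01234 {t : ℝ} (W : Finset ℝ) (hW : W = ({0,1,2,3,4} : Finset ℝ))
    (V : Finset ℝ) (hV : V = ({0,1,2,3,4} : Finset ℝ).filter (· ≤ t)) : V = V := rfl

lemma dv0 {t : ℝ} (h0 : 0 ≤ t) (h1 : t < 1) : distVals dd t = [0] := by
  unfold distVals
  rw [image_dd]
  rw [show ({0,1,2,3,4} : Finset ℝ).filter (· ≤ t) = {0} from by
    ext a
    simp only [Finset.mem_filter, Finset.mem_insert, Finset.mem_singleton]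
    constructor
    · rintro ⟨rfl | rfl | rfl | rfl | rfl, h⟩ <;> first | rfl | linarith
    · rintro rfl; exact ⟨Or.inl rfl, h0⟩]
  exact Finset.sort_singleton _ _

lemma dv1 {t : ℝ} (h0 : 1 ≤ t) (h1 : t < 2) : distVals dd t = [0, 1] := by
  unfold distVals
  rw [image_dd]
  rw [show ({0,1,2,3,4} : Finset ℝ).filter (· ≤ t) = {0, 1} from by
    ext a
    simp only [Finset.mem_filter, Finset.mem_insert, Finset.mem_singleton]
    constructor
    · rintro ⟨rfl | rfl | rfl | rfl | rfl, h⟩ <;>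
        first | exact Or.inl rfl | exact Or.inr rfl | linarith
    · rintro (rfl | rfl)
      · exact ⟨Or.inl rfl, by linarith⟩
      · exact ⟨Or.inr (Or.inl rfl), h0⟩]
  rw [Finset.sort_insert (r := (· ≤ ·)) (by norm_num) (by norm_num), Finset.sort_singleton (· ≤ ·)]

lemma dv2 {t : ℝ} (h0 : 2 ≤ t) (h1 : t < 3) : distVals dd t = [0, 1, 2] := by
  unfold distVals
  rw [image_dd]
  rw [show ({0,1,2,3,4} : Finset ℝ).filter (· ≤ t) = {0, 1, 2} from by
    ext a
    simp only [Finset.mem_filter, Finset.mem_insert, Finset.mem_singleton]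
    constructor
    · rintro ⟨rfl | rfl | rfl | rfl | rfl, h⟩ <;>
        first | exact Or.inl rfl | exact Or.inr (Or.inl rfl) | exact Or.inr (Or.inr rfl) |
          linarith
    · rintro (rfl | rfl | rfl)
      · exact ⟨Or.inl rfl, by linarith⟩
      · exact ⟨Or.inr (Or.inl rfl), by linarith⟩
      · exact ⟨Or.inr (Or.inr (Or.inl rfl)), h0⟩]
  rw [Finset.sort_insert (r := (· ≤ ·)) (by norm_num) (by norm_num),
    Finset.sort_insert (r := (· ≤ ·)) (by norm_num) (by norm_num), Finset.sort_singleton (· ≤ ·)]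

lemma dv3 {t : ℝ} (h0 : 3 ≤ t) (h1 : t < 4) : distVals dd t = [0, 1, 2, 3] := by
  unfold distVals
  rw [image_dd]
  rw [show ({0,1,2,3,4} : Finset ℝ).filter (· ≤ t) = {0, 1, 2, 3} from by
    ext a
    simp only [Finset.mem_filter, Finset.mem_insert, Finset.mem_singleton]
    constructor
    · rintro ⟨rfl | rfl | rfl | rfl | rfl, h⟩ <;>
        first | exact Or.inl rfl | exact Or.inr (Or.inl rfl) |
          exact Or.inr (Or.inr (Or.inl rfl)) | exact Or.inr (Or.inr (Or.inr rfl)) | linarith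
    · rintro (rfl | rfl | rfl | rfl)
      · exact ⟨Or.inl rfl, by linarith⟩
      · exact ⟨Or.inr (Or.inl rfl), by linarith⟩
      · exact ⟨Or.inr (Or.inr (Or.inl rfl)), by linarith⟩
      · exact ⟨Or.inr (Or.inr (Or.inr (Or.inl rfl))), h0⟩]
  rw [Finset.sort_insert (r := (· ≤ ·)) (by norm_num) (by norm_num),
    Finset.sort_insert (r := (· ≤ ·)) (by norm_num) (by norm_num),
    Finset.sort_insert (r := (· ≤ ·)) (by norm_num) (by norm_num), Finset.sort_singleton (· ≤ ·)]

lemma dv4 {t : ℝ} (h0 : 4 ≤ t) : distVals dd t = [0, 1, 2, 3, 4] := by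
  unfold distVals
  rw [image_dd]
  rw [show ({0,1,2,3,4} : Finset ℝ).filter (· ≤ t) = {0, 1, 2, 3, 4} from by
    ext a
    simp only [Finset.mem_filter, Finset.mem_insert, Finset.mem_singleton]
    constructor
    · rintro ⟨h, -⟩; exact h
    · rintro (rfl | rfl | rfl | rfl | rfl)
      · exact ⟨Or.inl rfl, by linarith⟩
      · exact ⟨Or.inr (Or.inl rfl), by linarith⟩
      · exact ⟨Or.inr (Or.inr (Or.inl rfl)), by linarith⟩
      · exact ⟨Or.inr (Or.inr (Or.inr (Or.inl rfl))), by linarith⟩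
      · exact ⟨Or.inr (Or.inr (Or.inr (Or.inr rfl))), h0⟩]
  rw [Finset.sort_insert (r := (· ≤ ·)) (by norm_num) (by norm_num),
    Finset.sort_insert (r := (· ≤ ·)) (by norm_num) (by norm_num),
    Finset.sort_insert (r := (· ≤ ·)) (by norm_num) (by norm_num),
    Finset.sort_insert (r := (· ≤ ·)) (by norm_num) (by norm_num), Finset.sort_singleton (· ≤ ·)]
lemma singletons_eq_P0 : singletons (Fin 12) = P0 := rfl

lemma ncard_P0 : ∀ B ∈ P0, B.ncard = 1 := by
  rintro B ⟨x, rfl⟩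
  exact Set.ncard_singleton x

lemma ncard_P1 : ∀ B ∈ P1, B.ncard = 3 := by
  intro B hB
  rcases mem_P1 hB with rfl | rfl | rfl | rfl <;>
    rw [Set.ncard_coe_finset] <;> decide

lemma ncard_P2 : ∀ B ∈ P2, B.ncard = 6 := by
  intro B hB
  rcases mem_P2 hB with rfl | rfl <;> rw [Set.ncard_coe_finset] <;> decide

section ThetaComp
variable {α t : ℝ}

lemma star0 (hα : 1 ≤ α) (s : ℝ) : mergeStepStar dd α s P0 = mergeStep dd α s P0 :=
  mergeStepStar_eq_mergeStep dd_metric.2.2.1 1 hα ncard_P0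
lemma star1 (hα : 1 ≤ α) (s : ℝ) : mergeStepStar dd α s P1 = mergeStep dd α s P1 :=
  mergeStepStar_eq_mergeStep dd_metric.2.2.1 3 hα ncard_P1
lemma star2 (hα : 1 ≤ α) (s : ℝ) : mergeStepStar dd α s P2 = mergeStep dd α s P2 :=
  mergeStepStar_eq_mergeStep dd_metric.2.2.1 6 hα ncard_P2

lemma theta_lt1 (hα : 1 ≤ α) (h0 : 0 ≤ t) (h1 : t < 1) :
    theta dd α t = P0 ∧ thetaStar dd α t = P0 := by
  unfold theta thetaStar
  rw [dv0 h0 h1]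
  simp only [List.foldl, singletons_eq_P0]
  rw [star0 hα 0, step_zero rfl]
  exact ⟨rfl, rfl⟩

lemma theta_lt2 (hα : 1 ≤ α) (h0 : 1 ≤ t) (h1 : t < 2) :
    theta dd α t = P1 ∧ thetaStar dd α t = P1 := by
  unfold theta thetaStar
  rw [dv1 h0 h1]
  simp only [List.foldl, singletons_eq_P0]
  rw [star0 hα 0, step_zero rfl, star0 hα 1, step_one hα]
  exact ⟨rfl, rfl⟩

lemma theta2_lt3 (h0 : 2 ≤ t) (h1 : t < 3) :
    theta dd 2 t = P2 ∧ thetaStar dd 2 t = P2 := by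
  have hα : (1:ℝ) ≤ 2 := by norm_num
  unfold theta thetaStar
  rw [dv2 h0 h1]
  simp only [List.foldl, singletons_eq_P0]
  rw [star0 hα 0, step_zero rfl, star0 hα 1, step_one hα, star1 hα 2, step2_2]
  exact ⟨rfl, rfl⟩

lemma theta2_lt4 (h0 : 3 ≤ t) (h1 : t < 4) :
    theta dd 2 t = P2 ∧ thetaStar dd 2 t = P2 := by
  have hα : (1:ℝ) ≤ 2 := by norm_num
  unfold theta thetaStar
  rw [dv3 h0 h1]
  simp only [List.foldl, singletons_eq_P0]
  rw [star0 hα 0, step_zero rfl, star0 hα 1, step_one hα, star1 hα 2, step2_2,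
    star2 hα 3, step2_3]
  exact ⟨rfl, rfl⟩

lemma theta2_ge4 (h0 : 4 ≤ t) :
    theta dd 2 t = P3 ∧ thetaStar dd 2 t = P3 := by
  have hα : (1:ℝ) ≤ 2 := by norm_num
  unfold theta thetaStar
  rw [dv4 h0]
  simp only [List.foldl, singletons_eq_P0]
  rw [star0 hα 0, step_zero rfl, star0 hα 1, step_one hα, star1 hα 2, step2_2,
    star2 hα 3, step2_3, star2 hα 4, step2_4]
  exact ⟨rfl, rfl⟩

lemma theta1_lt3 (h0 : 2 ≤ t) (h1 : t < 3) :
    theta dd 1 t = P1 ∧ thetaStar dd 1 t = P1 := by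
  have hα : (1:ℝ) ≤ 1 := le_refl 1
  unfold theta thetaStar
  rw [dv2 h0 h1]
  simp only [List.foldl, singletons_eq_P0]
  rw [star0 hα 0, step_zero rfl, star0 hα 1, step_one hα, star1 hα 2, step1_2]
  exact ⟨rfl, rfl⟩

lemma theta1_lt4 (h0 : 3 ≤ t) (h1 : t < 4) :
    theta dd 1 t = P3 ∧ thetaStar dd 1 t = P3 := by
  have hα : (1:ℝ) ≤ 1 := le_refl 1
  unfold theta thetaStar
  rw [dv3 h0 h1]
  simp only [List.foldl, singletons_eq_P0]
  rw [star0 hα 0, step_zero rfl, star0 hα 1, step_one hα, star1 hα 2, step1_2,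
    star1 hα 3, step1_3]
  exact ⟨rfl, rfl⟩

end ThetaComp
lemma not_both_P0 {x y : Fin 12} (hxy : x ≠ y) {B : Set (Fin 12)} (hB : B ∈ P0)
    (hx : x ∈ B) (hy : y ∈ B) : False := by
  obtain ⟨z, rfl⟩ := mem_P0 hB
  rw [Set.mem_singleton_iff] at hx hy
  exact hxy (hx.trans hy.symm)

lemma not_both_P1_03 {B : Set (Fin 12)} (hB : B ∈ P1)
    (hx : (0 : Fin 12) ∈ B) (hy : (3 : Fin 12) ∈ B) : False := by
  rcases mem_P1 hB with rfl | rfl | rfl | rfl <;>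
    exact absurd (⟨Finset.mem_coe.mp hx, Finset.mem_coe.mp hy⟩ :
      (0 : Fin 12) ∈ _ ∧ (3 : Fin 12) ∈ _) (by decide)

lemma not_both_P1_06 {B : Set (Fin 12)} (hB : B ∈ P1)
    (hx : (0 : Fin 12) ∈ B) (hy : (6 : Fin 12) ∈ B) : False := by
  rcases mem_P1 hB with rfl | rfl | rfl | rfl <;>
    exact absurd (⟨Finset.mem_coe.mp hx, Finset.mem_coe.mp hy⟩ :
      (0 : Fin 12) ∈ _ ∧ (6 : Fin 12) ∈ _) (by decide)

lemma not_both_P2_06 {B : Set (Fin 12)} (hB : B ∈ P2)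
    (hx : (0 : Fin 12) ∈ B) (hy : (6 : Fin 12) ∈ B) : False := by
  rcases mem_P2 hB with rfl | rfl <;>
    exact absurd (⟨Finset.mem_coe.mp hx, Finset.mem_coe.mp hy⟩ :
      (0 : Fin 12) ∈ _ ∧ (6 : Fin 12) ∈ _) (by decide)

lemma mem_coe_FPQ_0 : (0 : Fin 12) ∈ (↑FPQ : Set (Fin 12)) := Finset.mem_coe.mpr (by decide)
lemma mem_coe_FPQ_3 : (3 : Fin 12) ∈ (↑FPQ : Set (Fin 12)) := Finset.mem_coe.mpr (by decide)

lemma bddBelow_u (S : Set ℝ) (hS : ∀ r ∈ S, (0:ℝ) ≤ r) : BddBelow S := ⟨0, hS⟩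

-- upper bounds
lemma uA2_03 : uAlpha dd 2 0 3 ≤ 2 := by
  apply csInf_le ⟨0, fun r hr => hr.1⟩
  exact ⟨by norm_num, ↑FPQ, by rw [(theta2_lt3 (le_refl 2) (by norm_num)).1]; exact Or.inl rfl,
    mem_coe_FPQ_0, mem_coe_FPQ_3⟩

lemma uS2_03 : uStar dd 2 0 3 ≤ 2 := by
  apply csInf_le ⟨0, fun r hr => hr.1⟩
  exact ⟨by norm_num, ↑FPQ, by rw [(theta2_lt3 (le_refl 2) (by norm_num)).2]; exact Or.inl rfl,
    mem_coe_FPQ_0, mem_coe_FPQ_3⟩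

lemma uA1_06 : uAlpha dd 1 0 6 ≤ 3 := by
  apply csInf_le ⟨0, fun r hr => hr.1⟩
  refine ⟨by norm_num, Set.univ, ?_, trivial, trivial⟩
  rw [(theta1_lt4 (le_refl 3) (by norm_num)).1]
  rfl

lemma uS1_06 : uStar dd 1 0 6 ≤ 3 := by
  apply csInf_le ⟨0, fun r hr => hr.1⟩
  refine ⟨by norm_num, Set.univ, ?_, trivial, trivial⟩
  rw [(theta1_lt4 (le_refl 3) (by norm_num)).2]
  rfl

-- lower bounds
lemma uA1_03 : 3 ≤ uAlpha dd 1 0 3 := by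
  apply le_csInf
  · refine ⟨3, by norm_num, Set.univ, ?_, trivial, trivial⟩
    rw [(theta1_lt4 (le_refl 3) (by norm_num)).1]
    rfl
  · rintro b ⟨hb0, B, hB, h0B, h3B⟩
    by_contra hlt
    push_neg at hlt
    rcases lt_or_ge b 1 with h | h
    · rw [(theta_lt1 (le_refl 1) hb0 h).1] at hB
      exact not_both_P0 (by decide) hB h0B h3B
    rcases lt_or_ge b 2 with h2 | h2
    · rw [(theta_lt2 (le_refl 1) h h2).1] at hB
      exact not_both_P1_03 hB h0B h3B
    · rw [(theta1_lt3 h2 hlt).1] at hB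
      exact not_both_P1_03 hB h0B h3B

lemma uS1_03 : 3 ≤ uStar dd 1 0 3 := by
  apply le_csInf
  · refine ⟨3, by norm_num, Set.univ, ?_, trivial, trivial⟩
    rw [(theta1_lt4 (le_refl 3) (by norm_num)).2]
    rfl
  · rintro b ⟨hb0, B, hB, h0B, h3B⟩
    by_contra hlt
    push_neg at hlt
    rcases lt_or_ge b 1 with h | h
    · rw [(theta_lt1 (le_refl 1) hb0 h).2] at hB
      exact not_both_P0 (by decide) hB h0B h3B
    rcases lt_or_ge b 2 with h2 | h2
    · rw [(theta_lt2 (le_refl 1) h h2).2] at hB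
      exact not_both_P1_03 hB h0B h3B
    · rw [(theta1_lt3 h2 hlt).2] at hB
      exact not_both_P1_03 hB h0B h3B

lemma uA2_06 : 4 ≤ uAlpha dd 2 0 6 := by
  apply le_csInf
  · refine ⟨4, by norm_num, Set.univ, ?_, trivial, trivial⟩
    rw [(theta2_ge4 (le_refl 4)).1]
    rfl
  · rintro b ⟨hb0, B, hB, h0B, h6B⟩
    by_contra hlt
    push_neg at hlt
    rcases lt_or_ge b 1 with h | h
    · rw [(theta_lt1 (by norm_num) hb0 h).1] at hB
      exact not_both_P0 (by decide) hB h0B h6B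
    rcases lt_or_ge b 2 with h2 | h2
    · rw [(theta_lt2 (by norm_num) h h2).1] at hB
      exact not_both_P1_06 hB h0B h6B
    rcases lt_or_ge b 3 with h3 | h3
    · rw [(theta2_lt3 h2 h3).1] at hB
      exact not_both_P2_06 hB h0B h6B
    · rw [(theta2_lt4 h3 hlt).1] at hB
      exact not_both_P2_06 hB h0B h6B

lemma uS2_06 : 4 ≤ uStar dd 2 0 6 := by
  apply le_csInf
  · refine ⟨4, by norm_num, Set.univ, ?_, trivial, trivial⟩
    rw [(theta2_ge4 (le_refl 4)).2]
    rfl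
  · rintro b ⟨hb0, B, hB, h0B, h6B⟩
    by_contra hlt
    push_neg at hlt
    rcases lt_or_ge b 1 with h | h
    · rw [(theta_lt1 (by norm_num) hb0 h).2] at hB
      exact not_both_P0 (by decide) hB h0B h6B
    rcases lt_or_ge b 2 with h2 | h2
    · rw [(theta_lt2 (by norm_num) h h2).2] at hB
      exact not_both_P1_06 hB h0B h6B
    rcases lt_or_ge b 3 with h3 | h3
    · rw [(theta2_lt3 h2 h3).2] at hB
      exact not_both_P2_06 hB h0B h6B
    · rw [(theta2_lt4 h3 hlt).2] at hB
      exact not_both_P2_06 hB h0B h6B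

end SLproof

theorem SLalpha_SLstar_incomparable :
    (∃ (X : Type) (iX : Fintype X) (d : X → X → ℝ) (_ : IsMetric d) (α α' : ℝ),
      0 < α' ∧ α' < α ∧
      ¬ (∀ x y, @uAlpha X iX d α x y ≤ @uAlpha X iX d α' x y) ∧
      ¬ (∀ x y, @uAlpha X iX d α' x y ≤ @uAlpha X iX d α x y)) ∧
    (∃ (X : Type) (iX : Fintype X) (d : X → X → ℝ) (_ : IsMetric d) (α α' : ℝ),
      0 < α' ∧ α' < α ∧
      ¬ (∀ x y, @uStar X iX d α x y ≤ @uStar X iX d α' x y) ∧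
      ¬ (∀ x y, @uStar X iX d α' x y ≤ @uStar X iX d α x y)) := by
  constructor
  · refine ⟨Fin 12, inferInstance, SLproof.dd, SLproof.dd_metric, 2, 1, by norm_num,
      by norm_num, fun h => ?_, fun h => ?_⟩
    · have := h 0 6
      have h1 := SLproof.uA2_06
      have h2 := SLproof.uA1_06
      linarith
    · have := h 0 3
      have h1 := SLproof.uA1_03
      have h2 := SLproof.uA2_03
      linarith
  · refine ⟨Fin 12, inferInstance, SLproof.dd, SLproof.dd_metric, 2, 1, by norm_num,
      by norm_num, fun h => ?_, fun h => ?_⟩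
    · have := h 0 6
      have h1 := SLproof.uS2_06
      have h2 := SLproof.uS1_06
      linarith
    · have := h 0 3
      have h1 := SLproof.uS1_03
      have h2 := SLproof.uS2_03
      linarith
end
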